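/- arXiv:2410.22275 — 6 statements merged into one kernel-verified Lean document; each statement's English description precedes it below -/
import Mathlib

section
/- Fix θ ∈ ℝ. Let U ⊆ ℂ∖{0} be a set having 0 as a limit point, and let w : U → ℂ∖{0} and ℓ : U → ℂ be functions such that: (a) w(z) → 0 as z → 0 along U; (b) sup_{z∈U} |ℓ(z) − Log(w(z))| < ∞, where Log is the principal complex logarithm; (c) for every z ∈ U one has z·(1 + 2cos(θ)·w(z)·ℓ(z) − w(z)²) = 2i·w(z). Then, as z → 0 along U, w(z) = z/(2i) − (1/2)cos(θ)·z²·Log(z) + O(z²); that is, there exist C > 0 and δ > 0 such that |w(z) − z/(2i) + (1/2)cos(θ)·z²·Log(z)| ≤ C|z|² for all z ∈ U with |z| < δ. -/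
open Complex Filter

lemma aux_log_abs (t : ℝ) (h0 : 0 < t) (h1 : t ≤ 1) : |Real.log t| ≤ 2 / Real.sqrt t := by
  have hs0 : 0 < Real.sqrt t := Real.sqrt_pos.2 h0
  have habs : |Real.log t| = -Real.log t := abs_of_nonpos (Real.log_nonpos h0.le h1)
  have h2 : Real.log t = 2 * Real.log (Real.sqrt t) := by
    rw [Real.log_sqrt h0.le]; ring
  have h3 : Real.log (Real.sqrt t)⁻¹ ≤ (Real.sqrt t)⁻¹ - 1 :=
    Real.log_le_sub_one_of_pos (by positivity)
  rw [Real.log_inv] at h3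
  rw [habs, h2, div_eq_mul_inv]
  nlinarith

lemma aux_norm_log (z : ℂ) : ‖Complex.log z‖ ≤ |Real.log ‖z‖| + Real.pi := by
  have h := Complex.norm_le_abs_re_add_abs_im (Complex.log z)
  refine h.trans ?_
  rw [Complex.log_re, Complex.log_im]
  linarith [Complex.abs_arg_le_pi z]

lemma aux_log_sub (a b : ℂ) (ha : a ≠ 0) (h1 : ‖a‖ / 4 ≤ ‖b‖) (h2 : ‖b‖ ≤ ‖a‖) :
    ‖Complex.log b - Complex.log a‖ ≤ 3 + 2 * Real.pi := by
  have ha0 : 0 < ‖a‖ := norm_pos_iff.2 ha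
  have hb0 : 0 < ‖b‖ := lt_of_lt_of_le (by linarith) h1
  have h := Complex.norm_le_abs_re_add_abs_im (Complex.log b - Complex.log a)
  refine h.trans ?_
  rw [Complex.sub_re, Complex.sub_im, Complex.log_re, Complex.log_re,
    Complex.log_im, Complex.log_im]
  have hre : |Real.log ‖b‖ - Real.log ‖a‖| ≤ 3 := by
    have hda : Real.log ‖a‖ - Real.log ‖b‖ = Real.log (‖a‖ / ‖b‖) := by
      rw [Real.log_div ha0.ne' hb0.ne']
    have hr1 : (1:ℝ) ≤ ‖a‖ / ‖b‖ := (one_le_div hb0).2 h2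
    have hr2 : ‖a‖ / ‖b‖ ≤ 4 := by
      rw [div_le_iff₀ hb0]; linarith
    have hlog1 : 0 ≤ Real.log (‖a‖ / ‖b‖) := Real.log_nonneg hr1
    have hlog2 : Real.log (‖a‖ / ‖b‖) ≤ 3 := by
      have := Real.log_le_sub_one_of_pos (show (0:ℝ) < ‖a‖/‖b‖ by linarith)
      linarith
    rw [abs_sub_comm, hda, _root_.abs_of_nonneg hlog1]
    exact hlog2
  have him : |Complex.arg b - Complex.arg a| ≤ 2 * Real.pi := by
    have hpa := abs_le.1 (Complex.abs_arg_le_pi a)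
    have hpb := abs_le.1 (Complex.abs_arg_le_pi b)
    rw [abs_sub_le_iff]
    constructor <;> linarith [hpa.1, hpa.2, hpb.1, hpb.2]
  linarith

lemma aux_mul3 {a₁ a₂ b₁ b₂ c₁ c₂ : ℝ} (ha : a₁ ≤ a₂) (hb : b₁ ≤ b₂) (hc : c₁ ≤ c₂)
    (h1 : 0 ≤ b₁) (h2 : 0 ≤ c₁) (h3 : 0 ≤ a₂) (h4 : 0 ≤ b₂) :
    a₁ * (b₁ * c₁) ≤ a₂ * (b₂ * c₂) :=
  mul_le_mul ha (mul_le_mul hb hc h2 h4) (mul_nonneg h1 h2) h3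

lemma aux_mul4 {a₁ a₂ b₁ b₂ c₁ c₂ d₁ d₂ : ℝ} (ha : a₁ ≤ a₂) (hb : b₁ ≤ b₂) (hc : c₁ ≤ c₂)
    (hd : d₁ ≤ d₂) (h1 : 0 ≤ b₁) (h2 : 0 ≤ c₁) (h3 : 0 ≤ d₁) (h4 : 0 ≤ a₂) (h5 : 0 ≤ b₂)
    (h6 : 0 ≤ c₂) : a₁ * (b₁ * (c₁ * d₁)) ≤ a₂ * (b₂ * (c₂ * d₂)) :=
  mul_le_mul ha (aux_mul3 hb hc hd h2 h3 h5 h6)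
    (mul_nonneg h1 (mul_nonneg h2 h3)) h4

set_option maxHeartbeats 1000000 in
/-- **Asymptotics of the geodesic-pair map `𝔣_θ`.** If `w(z) → 0` as `z → 0` along `U`,
`ℓ` differs from `Log ∘ w` by a bounded function, and the defining relation
`z (1 + 2 cos θ · w ℓ − w²) = 2i w` holds on `U`, then
`w(z) = z/(2i) − (1/2) cos θ · z² Log z + O(z²)` as `z → 0` along `U`. -/
theorem geodesic_pair_first_asymptotics (θ : ℝ) (U : Set ℂ)
    (hU : (0 : ℂ) ∉ U) (hacc : (0 : ℂ) ∈ closure U)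
    (w ℓ : ℂ → ℂ)
    (hw0 : ∀ z ∈ U, w z ≠ 0)
    (hwlim : Tendsto w (nhdsWithin 0 U) (nhds 0))
    (hℓbd : ∃ M : ℝ, ∀ z ∈ U, ‖ℓ z - Complex.log (w z)‖ ≤ M)
    (heq : ∀ z ∈ U,
      z * (1 + 2 * (Real.cos θ : ℂ) * w z * ℓ z - (w z) ^ 2) = 2 * Complex.I * w z) :
    ∃ C > (0 : ℝ), ∃ δ > (0 : ℝ), ∀ z ∈ U, ‖z‖ < δ →
      ‖w z - z / (2 * Complex.I) + (1 / 2 : ℂ) * (Real.cos θ : ℂ) * z ^ 2 * Complex.log z‖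
        ≤ C * ‖z‖ ^ 2 := by
  obtain ⟨M₀, hM₀⟩ := hℓbd
  set M : ℝ := max M₀ 0 with hMdef
  have hM : ∀ z ∈ U, ‖ℓ z - Complex.log (w z)‖ ≤ M :=
    fun z hz => (hM₀ z hz).trans (le_max_left _ _)
  have hM0 : 0 ≤ M := le_max_right _ _
  have hπ : (0:ℝ) < Real.pi := Real.pi_pos
  set c : ℂ := (Real.cos θ : ℂ) with hc
  have hcn : ‖c‖ ≤ 1 := by
    rw [hc, Complex.norm_real, Real.norm_eq_abs]
    exact Real.abs_cos_le_one θ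
  set L := nhdsWithin (0:ℂ) U with hL
  obtain ⟨B, hB⟩ : ∃ B : ℝ, B = M + 3 + 2 * Real.pi := ⟨_, rfl⟩
  obtain ⟨K, hK⟩ : ∃ K : ℝ, K = B + Real.pi + 3 := ⟨_, rfl⟩
  obtain ⟨C, hCdef⟩ : ∃ C : ℝ, C = K^2 + B + 1 := ⟨_, rfl⟩
  have hBpos : 0 < B := by rw [hB]; linarith
  have hKpos : 0 < K := by rw [hK]; linarith
  have hCpos : 0 < C := by rw [hCdef]; positivity
  have h2I : (2*Complex.I) ≠ 0 := by simp [Complex.I_ne_zero]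
  -- Step 0: eventually facts
  have hUe : ∀ᶠ z in L, z ∈ U := eventually_mem_nhdsWithin
  have hwn : Tendsto (fun z => ‖w z‖) L (nhds 0) := by simpa using hwlim.norm
  have hw1 : ∀ᶠ z in L, ‖w z‖ < 1 := hwn.eventually_lt_const one_pos
  -- Step 1: w·ℓ → 0
  have hmul : Tendsto (fun z => w z * ℓ z) L (nhds 0) := by
    rw [tendsto_zero_iff_norm_tendsto_zero]
    have hg : Tendsto (fun z => (M + Real.pi) * ‖w z‖ + 2 * Real.sqrt ‖w z‖) L (nhds 0) := by
      have h1 := hwn.const_mul (M + Real.pi)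
      have h2 : Tendsto (fun z => Real.sqrt ‖w z‖) L (nhds 0) := by
        have := (Real.continuous_sqrt.tendsto 0).comp hwn
        simpa [Function.comp_def] using this
      have := h1.add (h2.const_mul 2)
      simpa [mul_comm] using this
    refine squeeze_zero' (.of_forall fun z => norm_nonneg _) ?_ hg
    filter_upwards [hUe, hw1] with z hzU hz1
    have hwz0 : w z ≠ 0 := hw0 z hzU
    have hwp : 0 < ‖w z‖ := norm_pos_iff.2 hwz0
    have hsl : |Real.log ‖w z‖| ≤ 2 / Real.sqrt ‖w z‖ := aux_log_abs _ hwp hz1.le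
    have hl : ‖ℓ z‖ ≤ M + (|Real.log ‖w z‖| + Real.pi) := by
      calc ‖ℓ z‖ = ‖(ℓ z - Complex.log (w z)) + Complex.log (w z)‖ := by ring_nf
        _ ≤ ‖ℓ z - Complex.log (w z)‖ + ‖Complex.log (w z)‖ := norm_add_le _ _
        _ ≤ M + (|Real.log ‖w z‖| + Real.pi) := add_le_add (hM z hzU) (aux_norm_log _)
    have hds : ‖w z‖ / Real.sqrt ‖w z‖ = Real.sqrt ‖w z‖ := Real.div_sqrt
    calc ‖w z * ℓ z‖ = ‖w z‖ * ‖ℓ z‖ := norm_mul _ _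
      _ ≤ ‖w z‖ * (M + (|Real.log ‖w z‖| + Real.pi)) :=
          mul_le_mul_of_nonneg_left hl hwp.le
      _ ≤ ‖w z‖ * (M + (2 / Real.sqrt ‖w z‖ + Real.pi)) := by
          apply mul_le_mul_of_nonneg_left _ hwp.le
          linarith
      _ = (M + Real.pi) * ‖w z‖ + 2 * (‖w z‖ / Real.sqrt ‖w z‖) := by ring
      _ = (M + Real.pi) * ‖w z‖ + 2 * Real.sqrt ‖w z‖ := by rw [hds]
  -- Step 2: w/z → 1/(2i)
  have hratio : Tendsto (fun z => w z / z) L (nhds ((1:ℂ)/(2*Complex.I))) := by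
    have hdiveq : ∀ z ∈ U, w z / z = (1 + 2*c*(w z * ℓ z) - (w z)^2)/(2*Complex.I) := by
      intro z hz
      have hz0 : z ≠ 0 := fun h => hU (h ▸ hz)
      rw [div_eq_div_iff hz0 h2I]
      linear_combination -heq z hz
    have hN : Tendsto (fun z => (1 + 2*c*(w z * ℓ z) - (w z)^2)/(2*Complex.I)) L
        (nhds ((1:ℂ)/(2*Complex.I))) := by
      have h1 : Tendsto (fun z => 1 + 2*c*(w z * ℓ z) - (w z)^2) L (nhds 1) := by
        have h0 := ((tendsto_const_nhds : Tendsto (fun _ : ℂ => (1:ℂ)) L (nhds 1)).add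
          (hmul.const_mul (2*c))).sub (hwlim.pow 2)
        simpa using h0
      exact h1.div_const _
    exact hN.congr' (by filter_upwards [hUe] with z hz using (hdiveq z hz).symm)
  have hrn : Tendsto (fun z => ‖w z / z‖) L (nhds (1/2 : ℝ)) := by
    have h0 := hratio.norm
    have hval : ‖(1:ℂ)/(2*Complex.I)‖ = 1/2 := by
      simp [norm_div]
    rwa [hval] at h0
  have hrIoo : ∀ᶠ z in L, ‖w z / z‖ ∈ Set.Ioo (4⁻¹ : ℝ) 1 :=
    hrn.eventually (Ioo_mem_nhds (by norm_num) (by norm_num))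
  have hz1e : ∀ᶠ z in L, ‖z‖ ≤ 1 := by
    rw [hL]
    apply eventually_nhdsWithin_of_eventually_nhds
    have h0 : Metric.closedBall (0:ℂ) 1 ∈ nhds (0:ℂ) := Metric.closedBall_mem_nhds _ one_pos
    filter_upwards [h0] with z hz
    simpa [Metric.mem_closedBall, dist_zero_right] using hz
  -- main eventual bound
  have hfin : ∀ᶠ z in L,
      ‖w z - z / (2 * Complex.I) + (1 / 2 : ℂ) * c * z ^ 2 * Complex.log z‖ ≤ C * ‖z‖ ^ 2 := by
    filter_upwards [hUe, hz1e, hrIoo] with z hzU ht1 hr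
    have hz0 : z ≠ 0 := fun h => hU (h ▸ hzU)
    have ht0 : 0 < ‖z‖ := norm_pos_iff.2 hz0
    have hwz0 : w z ≠ 0 := hw0 z hzU
    have hdn : ‖w z / z‖ = ‖w z‖ / ‖z‖ := norm_div _ _
    have hw_le : ‖w z‖ ≤ ‖z‖ := by
      have h0 := hr.2
      rw [hdn, div_lt_one ht0] at h0
      exact h0.le
    have hw_ge : ‖z‖ / 4 ≤ ‖w z‖ := by
      have h0 := hr.1
      rw [hdn, lt_div_iff₀ ht0] at h0
      linarith
    -- bound on ℓ - log z
    have hBz : ‖ℓ z - Complex.log z‖ ≤ B := by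
      have hsplit : ℓ z - Complex.log z
          = (ℓ z - Complex.log (w z)) + (Complex.log (w z) - Complex.log z) := by ring
      rw [hsplit]
      refine (norm_add_le _ _).trans ?_
      have h0 := aux_log_sub z (w z) hz0 hw_ge hw_le
      rw [hB]; linarith [hM z hzU]
    have hΛ0 : (0:ℝ) ≤ ‖Complex.log z‖ := norm_nonneg _
    have hΛ : ‖Complex.log z‖ ≤ 2 / Real.sqrt ‖z‖ + Real.pi := by
      refine (aux_norm_log z).trans ?_
      have := aux_log_abs ‖z‖ ht0 ht1
      linarith
    have hl : ‖ℓ z‖ ≤ ‖Complex.log z‖ + B := by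
      have h0 := norm_add_le (ℓ z - Complex.log z) (Complex.log z)
      simp only [sub_add_cancel] at h0
      linarith
    -- key identities
    have key2 : w z + Complex.I*z/2 = -Complex.I*c*z*(w z)*(ℓ z) + Complex.I/2*z*(w z)^2 := by
      linear_combination (Complex.I/2) * heq z hzU + (w z) * Complex.I_sq
    have key : w z + Complex.I*z/2 + (1/2:ℂ)*c*z^2*Complex.log z
        = -Complex.I*c*z*(w z + Complex.I*z/2)*(ℓ z) - (1/2:ℂ)*c*z^2*(ℓ z - Complex.log z)
          + Complex.I/2*z*(w z)^2 := by
      linear_combination (Complex.I/2) * heq z hzU + (w z + (1/2:ℂ)*c*z^2*ℓ z) * Complex.I_sq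
    have ht3 : ‖z‖^3 ≤ ‖z‖^2 := pow_le_pow_of_le_one ht0.le ht1 (by norm_num)
    -- bound on r = w + iz/2
    have hr2 : ‖w z + Complex.I*z/2‖ ≤ ‖z‖^2 * (‖Complex.log z‖ + B + 1) := by
      rw [key2]
      refine (norm_add_le _ _).trans ?_
      have e1 : ‖-Complex.I*c*z*(w z)*(ℓ z)‖ = ‖c‖ * (‖z‖ * (‖w z‖ * ‖ℓ z‖)) := by
        rw [norm_mul, norm_mul, norm_mul, norm_mul, norm_neg, Complex.norm_I]; ring
      have e2 : ‖Complex.I/2*z*(w z)^2‖ = (1/2) * (‖z‖ * ‖w z‖^2) := by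
        rw [norm_mul, norm_mul, norm_pow, norm_div, Complex.norm_I]
        norm_num
        ring
      rw [e1, e2]
      have b1 : ‖c‖ * (‖z‖ * (‖w z‖ * ‖ℓ z‖))
          ≤ 1 * (‖z‖ * (‖z‖ * (‖Complex.log z‖ + B))) :=
        aux_mul4 hcn le_rfl hw_le hl (norm_nonneg _) (norm_nonneg _) (norm_nonneg _)
          zero_le_one (norm_nonneg _) (norm_nonneg _)
      have b2 : ‖w z‖^2 ≤ ‖z‖^2 := by
        have := pow_le_pow_left₀ (norm_nonneg (w z)) hw_le 2
        simpa using this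
      have b3 : (1/2:ℝ) * (‖z‖ * ‖w z‖^2) ≤ (1/2) * ‖z‖^3 := by
        have : ‖z‖ * ‖w z‖^2 ≤ ‖z‖ * ‖z‖^2 := mul_le_mul_of_nonneg_left b2 ht0.le
        have he : ‖z‖ * ‖z‖^2 = ‖z‖^3 := by ring
        linarith [he ▸ this]
      nlinarith [ht3]
    -- final bound
    have hgoal : ‖w z + Complex.I*z/2 + (1/2:ℂ)*c*z^2*Complex.log z‖ ≤ C * ‖z‖^2 := by
      rw [key]
      have e1 : ‖-Complex.I*c*z*(w z + Complex.I*z/2)*(ℓ z)‖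
          = ‖c‖ * (‖z‖ * (‖w z + Complex.I*z/2‖ * ‖ℓ z‖)) := by
        rw [norm_mul, norm_mul, norm_mul, norm_mul, norm_neg, Complex.norm_I]; ring
      have e2 : ‖(1/2:ℂ)*c*z^2*(ℓ z - Complex.log z)‖
          = (1/2) * (‖c‖ * (‖z‖^2 * ‖ℓ z - Complex.log z‖)) := by
        rw [norm_mul, norm_mul, norm_mul, norm_pow]
        norm_num
        ring
      have e3 : ‖Complex.I/2*z*(w z)^2‖ = (1/2) * (‖z‖ * ‖w z‖^2) := by
        rw [norm_mul, norm_mul, norm_pow, norm_div, Complex.norm_I]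
        norm_num
        ring
      have tri : ‖-Complex.I*c*z*(w z + Complex.I*z/2)*(ℓ z)
            - (1/2:ℂ)*c*z^2*(ℓ z - Complex.log z) + Complex.I/2*z*(w z)^2‖
          ≤ ‖-Complex.I*c*z*(w z + Complex.I*z/2)*(ℓ z)‖
            + ‖(1/2:ℂ)*c*z^2*(ℓ z - Complex.log z)‖ + ‖Complex.I/2*z*(w z)^2‖ := by
        refine (norm_add_le _ _).trans ?_
        have := norm_sub_le (-Complex.I*c*z*(w z + Complex.I*z/2)*(ℓ z))
          ((1/2:ℂ)*c*z^2*(ℓ z - Complex.log z))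
        linarith
      refine tri.trans ?_
      rw [e1, e2, e3]
      -- numeric part
      have hs0 : 0 < Real.sqrt ‖z‖ := Real.sqrt_pos.2 ht0
      have hs1 : Real.sqrt ‖z‖ ≤ 1 := Real.sqrt_le_one.2 ht1
      have hst : Real.sqrt ‖z‖ ^ 2 = ‖z‖ := Real.sq_sqrt ht0.le
      have hΛs : ‖Complex.log z‖ * Real.sqrt ‖z‖ ≤ 2 + Real.pi * Real.sqrt ‖z‖ := by
        have h0 := mul_le_mul_of_nonneg_right hΛ hs0.le
        have h1 : (2 / Real.sqrt ‖z‖ + Real.pi) * Real.sqrt ‖z‖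
            = 2 + Real.pi * Real.sqrt ‖z‖ := by
          rw [add_mul, div_mul_cancel₀ _ hs0.ne']
        linarith [h1 ▸ h0]
      have hKey : Real.sqrt ‖z‖ * (‖Complex.log z‖ + B + 1) ≤ K := by
        have h1 : Real.pi * Real.sqrt ‖z‖ ≤ Real.pi := by nlinarith
        have h2 : (B + 1) * Real.sqrt ‖z‖ ≤ B + 1 := by nlinarith
        rw [hK]
        nlinarith
      have hq : ‖z‖ * (‖Complex.log z‖ + B + 1)^2 ≤ K^2 := by
        have h1 : (Real.sqrt ‖z‖ * (‖Complex.log z‖ + B + 1))^2 ≤ K^2 :=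
          pow_le_pow_left₀ (by positivity) hKey 2
        calc ‖z‖ * (‖Complex.log z‖ + B + 1)^2
            = (Real.sqrt ‖z‖ * (‖Complex.log z‖ + B + 1))^2 := by rw [mul_pow, hst]
          _ ≤ K^2 := h1
      have term1 : ‖c‖ * (‖z‖ * (‖w z + Complex.I*z/2‖ * ‖ℓ z‖))
          ≤ ‖z‖ * (‖z‖^2 * (‖Complex.log z‖ + B + 1) * ((‖Complex.log z‖ + B))) := by
        have h0 : ‖c‖ * (‖z‖ * (‖w z + Complex.I*z/2‖ * ‖ℓ z‖))
            ≤ 1 * (‖z‖ * ((‖z‖^2 * (‖Complex.log z‖ + B + 1)) * (‖Complex.log z‖ + B))) :=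
          aux_mul4 hcn le_rfl hr2 hl (norm_nonneg _) (norm_nonneg _) (norm_nonneg _)
            zero_le_one (norm_nonneg _) (by positivity)
        calc ‖c‖ * (‖z‖ * (‖w z + Complex.I*z/2‖ * ‖ℓ z‖))
            ≤ 1 * (‖z‖ * ((‖z‖^2 * (‖Complex.log z‖ + B + 1)) * (‖Complex.log z‖ + B))) := h0
          _ = ‖z‖ * (‖z‖^2 * (‖Complex.log z‖ + B + 1) * ((‖Complex.log z‖ + B))) := by ring
      have hq2 : ‖z‖ * (‖z‖^2 * (‖Complex.log z‖ + B + 1) * ((‖Complex.log z‖ + B)))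
          ≤ K^2 * ‖z‖^2 := by
        have h0 : (‖Complex.log z‖ + B + 1) * (‖Complex.log z‖ + B)
            ≤ (‖Complex.log z‖ + B + 1)^2 := by nlinarith
        have h1 : ‖z‖ * ((‖Complex.log z‖ + B + 1) * (‖Complex.log z‖ + B)) ≤ K^2 := by
          have h2 : ‖z‖ * ((‖Complex.log z‖ + B + 1) * (‖Complex.log z‖ + B))
              ≤ ‖z‖ * (‖Complex.log z‖ + B + 1)^2 := mul_le_mul_of_nonneg_left h0 ht0.le
          linarith
        calc ‖z‖ * (‖z‖^2 * (‖Complex.log z‖ + B + 1) * ((‖Complex.log z‖ + B)))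
            = ‖z‖^2 * (‖z‖ * ((‖Complex.log z‖ + B + 1) * (‖Complex.log z‖ + B))) := by ring
          _ ≤ ‖z‖^2 * K^2 := mul_le_mul_of_nonneg_left h1 (sq_nonneg _)
          _ = K^2 * ‖z‖^2 := by ring
      have term2 : (1/2:ℝ) * (‖c‖ * (‖z‖^2 * ‖ℓ z - Complex.log z‖))
          ≤ (1/2) * (B * ‖z‖^2) := by
        have h0 : ‖c‖ * (‖z‖^2 * ‖ℓ z - Complex.log z‖) ≤ 1 * (‖z‖^2 * B) :=
          aux_mul3 hcn le_rfl hBz (sq_nonneg _) (norm_nonneg _) zero_le_one (sq_nonneg _)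
        nlinarith
      have term3 : (1/2:ℝ) * (‖z‖ * ‖w z‖^2) ≤ (1/2) * ‖z‖^2 := by
        have b2 : ‖w z‖^2 ≤ ‖z‖^2 := by
          have := pow_le_pow_left₀ (norm_nonneg (w z)) hw_le 2
          simpa using this
        have h0 : ‖z‖ * ‖w z‖^2 ≤ ‖z‖ * ‖z‖^2 := mul_le_mul_of_nonneg_left b2 ht0.le
        have he : ‖z‖ * ‖z‖^2 = ‖z‖^3 := by ring
        have := he ▸ h0
        linarith [ht3]
      have hBt : 0 ≤ B * ‖z‖^2 := mul_nonneg hBpos.le (sq_nonneg _)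
      rw [hCdef]
      linarith [term1.trans hq2, term2, term3, hBt, sq_nonneg ‖z‖]
    have hEeq : w z - z / (2 * Complex.I) + (1 / 2 : ℂ) * c * z ^ 2 * Complex.log z
        = w z + Complex.I*z/2 + (1/2:ℂ)*c*z^2*Complex.log z := by
      have hzdiv : z / (2*Complex.I) = -(Complex.I*z/2) := by
        rw [div_eq_iff h2I]
        linear_combination z * Complex.I_sq
      rw [hzdiv]; ring
    rw [hEeq]
    exact hgoal
  -- extract δ
  refine ⟨C, hCpos, ?_⟩
  rw [hL] at hfin
  obtain ⟨δ, hδ, hsub⟩ := Metric.mem_nhdsWithin_iff.1 hfin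
  refine ⟨δ, hδ, fun z hzU hzδ => ?_⟩
  exact hsub ⟨by simpa [Metric.mem_ball, dist_zero_right] using hzδ, hzU⟩
end

section
/- Fix θ ∈ ℝ. Let V ⊆ ℂ∖{0} be open with a holomorphic function L : V → ℂ satisfying exp(L(w)) = i·w for all w ∈ V and with Im L bounded on V, and suppose 1 + 2cos(θ)·w·L(w) − w² ≠ 0 on V; define G(w) = 2i·w/(1 + 2cos(θ)·w·L(w) − w²). Let U ⊆ ℂ∖{0} be open with 0 as a limit point, and let F : U → V be holomorphic with G(F(z)) = z for all z ∈ U and F(z) → 0 as z → 0 along U. Then, as z → 0 along U, F′(z) = 1/(2i) − cos(θ)·z·Log(z) + O(z), where Log is the principal complex logarithm. -/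
open Complex Filter

lemma aux_log_pow (C : ℝ) (n : ℕ) :
    Tendsto (fun t : ℝ => t * (C + |Real.log t|) ^ n) (nhdsWithin 0 (Set.Ioi 0)) (nhds 0) := by
  have h1 : Tendsto (fun t : ℝ => -Real.log t) (nhdsWithin 0 (Set.Ioi 0)) atTop :=
    tendsto_neg_atBot_atTop.comp Real.tendsto_log_nhdsGT_zero
  have h2 : Tendsto (fun x : ℝ => (C + x) ^ n * Real.exp (-x)) atTop (nhds 0) := by
    have h3 : Tendsto (fun x : ℝ => (C + x) ^ n * Real.exp (-(C + x)) * Real.exp C) atTop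
        (nhds 0) := by
      have := ((Real.tendsto_pow_mul_exp_neg_atTop_nhds_zero n).comp
        (tendsto_atTop_add_const_left atTop C tendsto_id)).mul_const (Real.exp C)
      simpa using this
    refine h3.congr (fun x => ?_)
    rw [mul_assoc, ← Real.exp_add]
    ring_nf
  have h4 := h2.comp h1
  refine h4.congr' ?_
  filter_upwards [self_mem_nhdsWithin, Ioo_mem_nhdsGT (by norm_num : (0:ℝ) < 1)]
    with t ht ht1
  have htpos : 0 < t := ht
  have hlt : Real.log t < 0 := Real.log_neg htpos ht1.2
  simp only [Function.comp]
  rw [abs_of_neg hlt, neg_neg, Real.exp_log htpos]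
  ring

lemma aux_L_deriv (V : Set ℂ) (hVopen : IsOpen V) (L : ℂ → ℂ)
    (hLhol : DifferentiableOn ℂ L V)
    (hLexp : ∀ w ∈ V, Complex.exp (L w) = Complex.I * w)
    {w : ℂ} (hw : w ∈ V) : HasDerivAt L w⁻¹ w := by
  have hw0 : w ≠ 0 := by
    intro h
    have := hLexp w hw
    rw [h, mul_zero] at this
    exact Complex.exp_ne_zero _ this
  have hd : DifferentiableAt ℂ L w :=
    (hLhol w hw).differentiableAt (hVopen.mem_nhds hw)
  have h1 : HasDerivAt (fun u => Complex.exp (L u)) (Complex.exp (L w) * deriv L w) w :=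
    hd.hasDerivAt.cexp
  have heq : (fun u => Complex.exp (L u)) =ᶠ[nhds w] fun u => Complex.I * u := by
    filter_upwards [hVopen.mem_nhds hw] with u hu using hLexp u hu
  have h2 : HasDerivAt (fun u : ℂ => Complex.I * u) (Complex.exp (L w) * deriv L w) w :=
    h1.congr_of_eventuallyEq heq.symm
  have h3 : HasDerivAt (fun u : ℂ => Complex.I * u) Complex.I w := by
    simpa using (hasDerivAt_id w).const_mul Complex.I
  have h4 : Complex.exp (L w) * deriv L w = Complex.I := h2.unique h3
  rw [hLexp w hw] at h4
  have h5 : deriv L w = w⁻¹ := by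
    have hI : Complex.I ≠ 0 := Complex.I_ne_zero
    have h6 : Complex.I * (w * deriv L w) = Complex.I * 1 := by
      rw [mul_one]; linear_combination h4
    exact eq_inv_of_mul_eq_one_left (by linear_combination mul_left_cancel₀ hI h6)
  rw [← h5]; exact hd.hasDerivAt

lemma aux_deriv_id (c : ℂ) (V : Set ℂ) (hVopen : IsOpen V) (hV0 : (0 : ℂ) ∉ V)
    (L : ℂ → ℂ) (hLhol : DifferentiableOn ℂ L V)
    (hLexp : ∀ w ∈ V, Complex.exp (L w) = Complex.I * w)
    (U : Set ℂ) (hUopen : IsOpen U)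
    (F : ℂ → ℂ) (hFhol : DifferentiableOn ℂ F U) (hFV : ∀ z ∈ U, F z ∈ V)
    (hkey : ∀ z ∈ U, 2 * Complex.I * F z = z * (1 + 2*c*F z*L (F z) - F z ^ 2))
    {z : ℂ} (hz : z ∈ U) :
    2 * Complex.I * deriv F z = (1 + 2*c*F z*L (F z) - F z ^ 2)
      + z * (2*c*(L (F z) + 1) - 2*F z) * deriv F z := by
  have hFz : F z ∈ V := hFV z hz
  have hFz0 : F z ≠ 0 := fun h => hV0 (h ▸ hFz)
  have hFd : HasDerivAt F (deriv F z) z :=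
    ((hFhol z hz).differentiableAt (hUopen.mem_nhds hz)).hasDerivAt
  have hLFd : HasDerivAt (fun u => L (F u)) ((F z)⁻¹ * deriv F z) z :=
    (aux_L_deriv V hVopen L hLhol hLexp hFz).comp z hFd
  have h1 : HasDerivAt (fun u => F u * L (F u))
      (deriv F z * L (F z) + F z * ((F z)⁻¹ * deriv F z)) z := hFd.mul hLFd
  have h3 : HasDerivAt (fun u => F u ^ 2) (2 * F z * deriv F z) z := by
    refine (hFd.fun_pow 2).congr_deriv ?_
    push_cast
    ring
  have hA : HasDerivAt (fun u => 1 + 2*c*F u*L (F u) - F u ^ 2)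
      (2*c*(deriv F z * L (F z) + F z * ((F z)⁻¹ * deriv F z)) - 2*F z*deriv F z) z := by
    have h2 := ((h1.const_mul (2*c)).const_add 1).sub h3
    have hfun : (fun u => 1 + 2*c*(F u*L (F u)) - F u^2)
        = (fun u => 1 + 2*c*F u*L (F u) - F u ^ 2) := by funext u; ring
    rw [← hfun]
    exact h2
  have hRHS : HasDerivAt (fun u => u * (1 + 2*c*F u*L (F u) - F u ^ 2))
      (1 * (1 + 2*c*F z*L (F z) - F z ^ 2)
        + z * (2*c*(deriv F z * L (F z) + F z * ((F z)⁻¹ * deriv F z)) - 2*F z*deriv F z)) z :=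
    (hasDerivAt_id z).mul hA
  have hLHS : HasDerivAt (fun u => 2 * Complex.I * F u) (2 * Complex.I * deriv F z) z :=
    hFd.const_mul (2 * Complex.I)
  have heq : (fun u => 2 * Complex.I * F u)
      =ᶠ[nhds z] fun u => u * (1 + 2*c*F u*L (F u) - F u ^ 2) := by
    filter_upwards [hUopen.mem_nhds hz] with u hu using hkey u hu
  have huniq := (hRHS.congr_of_eventuallyEq heq).unique hLHS
  have hinv : F z * ((F z)⁻¹ * deriv F z) = deriv F z := by
    field_simp
  rw [hinv] at huniq
  linear_combination -huniq

set_option maxHeartbeats 1000000 in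
/-- **Derivative asymptotics of the geodesic-pair map `𝔣_θ`.** Let `L` be a holomorphic
branch of `log(i·w)` with bounded imaginary part on an open set `V ⊆ ℂ ∖ {0}`, on which
`1 + 2 cos θ · w L(w) − w² ≠ 0`, and set `G(w) = 2i w/(1 + 2 cos θ · w L(w) − w²)`.
If `F : U → V` is a holomorphic right inverse of `G` on an open set `U ⊆ ℂ ∖ {0}` having
`0` as a limit point, with `F(z) → 0` as `z → 0` along `U`, then
`F′(z) = 1/(2i) − cos θ · z Log z + O(z)` as `z → 0` along `U`. -/
theorem geodesic_pair_derivative_asymptotics (θ : ℝ)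
    (V : Set ℂ) (hVopen : IsOpen V) (hV0 : (0 : ℂ) ∉ V)
    (L : ℂ → ℂ) (hLhol : DifferentiableOn ℂ L V)
    (hLexp : ∀ w ∈ V, Complex.exp (L w) = Complex.I * w)
    (hLbd : ∃ M : ℝ, ∀ w ∈ V, |(L w).im| ≤ M)
    (hden : ∀ w ∈ V, 1 + 2 * (Real.cos θ : ℂ) * w * L w - w ^ 2 ≠ 0)
    (U : Set ℂ) (hUopen : IsOpen U) (hU0 : (0 : ℂ) ∉ U) (hacc : (0 : ℂ) ∈ closure U)
    (F : ℂ → ℂ) (hFhol : DifferentiableOn ℂ F U) (hFV : ∀ z ∈ U, F z ∈ V)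
    (hGF : ∀ z ∈ U,
      2 * Complex.I * F z / (1 + 2 * (Real.cos θ : ℂ) * F z * L (F z) - (F z) ^ 2) = z)
    (hFlim : Tendsto F (nhdsWithin 0 U) (nhds 0)) :
    ∃ C > (0 : ℝ), ∃ δ > (0 : ℝ), ∀ z ∈ U, ‖z‖ < δ →
      ‖deriv F z - 1 / (2 * Complex.I) + (Real.cos θ : ℂ) * z * Complex.log z‖
        ≤ C * ‖z‖ := by
  obtain ⟨M₀, hM₀⟩ := hLbd
  set M : ℝ := max M₀ 0 with hMdef
  have hM : ∀ w ∈ V, |(L w).im| ≤ M := fun w hw => le_trans (hM₀ w hw) (le_max_left _ _)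
  have hMnn : (0:ℝ) ≤ M := le_max_right _ _
  set c : ℂ := (Real.cos θ : ℂ) with hcdef
  have hc : ‖c‖ ≤ 1 := by
    rw [hcdef, Complex.norm_real, Real.norm_eq_abs]
    exact Real.abs_cos_le_one θ
  set l := nhdsWithin (0:ℂ) U with hldef
  have hl_le : l ≤ nhds 0 := nhdsWithin_le_nhds
  have evU : ∀ᶠ z in l, z ∈ U := self_mem_nhdsWithin
  set A : ℂ → ℂ := fun z => 1 + 2*c*F z*L (F z) - F z ^ 2 with hAdef
  set E : ℂ → ℂ := fun z => 2*c*(L (F z) + 1) - 2*F z with hEdef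
  set K₁ : ℝ := M + Real.pi + Real.log 4 with hK₁def
  have hK₁nn : (0:ℝ) ≤ K₁ := by
    have := Real.pi_pos
    have := Real.log_nonneg (by norm_num : (1:ℝ) ≤ 4)
    rw [hK₁def]; linarith
  set C₀ : ℝ := M + Real.log 4 + 1 with hC₀def
  set ℓ : ℂ → ℝ := fun z => C₀ + |Real.log ‖z‖| with hℓdef
  have hℓ1 : ∀ z : ℂ, 1 ≤ ℓ z := by
    intro z
    have := Real.log_nonneg (by norm_num : (1:ℝ) ≤ 4)
    have := abs_nonneg (Real.log ‖z‖)
    rw [hℓdef]; simp only; rw [hC₀def]; linarith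
  clear_value M c l A E K₁ C₀ ℓ
  -- pointwise facts
  have hzne : ∀ z ∈ U, z ≠ 0 := fun z hz h => hU0 (h ▸ hz)
  have hFne : ∀ z ∈ U, F z ≠ 0 := fun z hz h => hV0 (h ▸ hFV z hz)
  have hkey : ∀ z ∈ U, 2 * Complex.I * F z = z * A z := by
    intro z hz
    have h := hGF z hz
    rw [div_eq_iff (hden _ (hFV z hz))] at h
    simp only [hAdef]
    exact h
  have hLre : ∀ w ∈ V, (L w).re = Real.log ‖w‖ := by
    intro w hw
    have h1 := congrArg norm (hLexp w hw)
    rw [Complex.norm_exp, norm_mul, Complex.norm_I, one_mul] at h1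
    have h2 := congrArg Real.log h1
    rw [Real.log_exp] at h2
    rw [h2]
  have hLnorm : ∀ w ∈ V, ‖L w‖ ≤ |Real.log ‖w‖| + M := by
    intro w hw
    have h1 : ‖L w‖ ≤ |(L w).re| + |(L w).im| := by
      exact Complex.norm_le_abs_re_add_abs_im _
    rw [hLre w hw] at h1
    exact h1.trans (add_le_add le_rfl (hM w hw))
  -- filter facts
  have hFnorm_t : Tendsto (fun z => ‖F z‖) l (nhdsWithin 0 (Set.Ioi 0)) := by
    rw [tendsto_nhdsWithin_iff]
    constructor
    · simpa using hFlim.norm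
    · filter_upwards [evU] with z hz
      exact Set.mem_Ioi.mpr (norm_pos_iff.mpr (hFne z hz))
  have hznorm_t : Tendsto (fun z : ℂ => ‖z‖) l (nhdsWithin 0 (Set.Ioi 0)) := by
    rw [tendsto_nhdsWithin_iff]
    constructor
    · simpa using (continuous_norm.tendsto (0:ℂ)).mono_left hl_le
    · filter_upwards [evU] with z hz
      exact Set.mem_Ioi.mpr (norm_pos_iff.mpr (hzne z hz))
  have hFL_t : Tendsto (fun z => ‖F z‖ * (M + |Real.log ‖F z‖|)) l (nhds 0) := by
    simpa [pow_one, Function.comp_def] using (aux_log_pow M 1).comp hFnorm_t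
  have hFL0 : Tendsto (fun z => ‖F z‖ * ‖L (F z)‖) l (nhds 0) := by
    refine squeeze_zero' (by filter_upwards with z using by positivity) ?_ hFL_t
    filter_upwards [evU] with z hz
    have h1 := hLnorm (F z) (hFV z hz)
    have h0 : (0:ℝ) ≤ ‖F z‖ := norm_nonneg _
    nlinarith
  have hA_t : Tendsto A l (nhds 1) := by
    have h1 : Tendsto (fun z => F z * L (F z)) l (nhds 0) := by
      rw [tendsto_zero_iff_norm_tendsto_zero]
      simpa [norm_mul] using hFL0
    have h2 : Tendsto (fun z => F z ^ 2) l (nhds 0) := by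
      have := hFlim.pow 2
      simpa using this
    have h3 := ((tendsto_const_nhds (x := (1:ℂ)) (f := l)).add (h1.const_mul (2*c))).sub h2
    have h4 : Tendsto (fun z => 1 + 2*c*(F z * L (F z)) - F z ^ 2) l (nhds 1) := by
      simpa using h3
    refine h4.congr (fun z => ?_)
    simp only [hAdef]; ring
  have evA : ∀ᶠ z in l, ‖A z - 1‖ < 1/2 := by
    have h : Tendsto (fun z => ‖A z - 1‖) l (nhds 0) := by
      have := (hA_t.sub_const 1).norm
      simpa using this
    exact h.eventually_lt_const (by norm_num)
  have evAb : ∀ᶠ z in l, 1/2 ≤ ‖A z‖ ∧ ‖A z‖ ≤ 3/2 := by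
    filter_upwards [evA] with z hz
    have h1 := abs_norm_sub_norm_le (A z) 1
    rw [norm_one] at h1
    have h2 := abs_le.mp h1
    constructor <;> linarith [h2.1, h2.2]
  have evF : ∀ᶠ z in l, ‖z‖/4 ≤ ‖F z‖ ∧ ‖F z‖ ≤ ‖z‖ := by
    filter_upwards [evU, evAb] with z hz hA2
    have h := congrArg norm (hkey z hz)
    have h2 : (2:ℝ) * ‖F z‖ = ‖z‖ * ‖A z‖ := by
      simpa [norm_mul, Complex.norm_I] using h
    have h0 : (0:ℝ) ≤ ‖z‖ := norm_nonneg _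
    constructor <;> nlinarith [hA2.1, hA2.2]
  have ev_zsmall : ∀ᶠ z in l, ‖z‖ < 1/2 := by
    have := (hznorm_t.mono_right nhdsWithin_le_nhds).eventually_lt_const
      (by norm_num : (0:ℝ) < 1/2)
    exact this
  have ev_logF : ∀ᶠ z in l, |Real.log ‖F z‖| ≤ |Real.log ‖z‖| + Real.log 4 := by
    filter_upwards [evU, evF, ev_zsmall] with z hz hf hzs
    have hz0 : 0 < ‖z‖ := norm_pos_iff.mpr (hzne z hz)
    have hF0 : 0 < ‖F z‖ := norm_pos_iff.mpr (hFne z hz)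
    have hlz : Real.log ‖z‖ < 0 := Real.log_neg hz0 (by linarith)
    have h1 : Real.log ‖F z‖ ≤ Real.log ‖z‖ := Real.log_le_log hF0 hf.2
    have h2 : Real.log (‖z‖/4) ≤ Real.log ‖F z‖ := Real.log_le_log (by positivity) hf.1
    rw [Real.log_div (ne_of_gt hz0) (by norm_num)] at h2
    rw [abs_of_neg (lt_of_le_of_lt h1 hlz), abs_of_neg hlz]
    linarith
  have ev_LF : ∀ᶠ z in l, ‖L (F z)‖ ≤ ℓ z := by
    filter_upwards [evU, ev_logF] with z hz h1
    have h2 := hLnorm (F z) (hFV z hz)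
    rw [hℓdef]; simp only; rw [hC₀def]
    linarith
  have ev_K : ∀ᶠ z in l, ‖L (F z) - Complex.log z‖ ≤ K₁ := by
    filter_upwards [evU, evF, ev_zsmall] with z hz hf hzs
    have hz0 : 0 < ‖z‖ := norm_pos_iff.mpr (hzne z hz)
    have hF0 : 0 < ‖F z‖ := norm_pos_iff.mpr (hFne z hz)
    have hre : (L (F z) - Complex.log z).re = Real.log ‖F z‖ - Real.log ‖z‖ := by
      rw [Complex.sub_re, hLre _ (hFV z hz), Complex.log_re]
    have him : |(L (F z) - Complex.log z).im| ≤ M + Real.pi := by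
      rw [Complex.sub_im, Complex.log_im]
      have h1 := hM _ (hFV z hz)
      have h2 := Complex.abs_arg_le_pi z
      have h3 : |(L (F z)).im - Complex.arg z| ≤ |(L (F z)).im| + |Complex.arg z| := by
        have := abs_add_le (L (F z)).im (-(Complex.arg z))
        simpa [sub_eq_add_neg] using this
      linarith
    have h1 : Real.log ‖F z‖ ≤ Real.log ‖z‖ := Real.log_le_log hF0 hf.2
    have h2 : Real.log (‖z‖/4) ≤ Real.log ‖F z‖ := Real.log_le_log (by positivity) hf.1
    rw [Real.log_div (ne_of_gt hz0) (by norm_num)] at h2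
    have hrb : |Real.log ‖F z‖ - Real.log ‖z‖| ≤ Real.log 4 := by
      rw [abs_of_nonpos (by linarith)]
      linarith
    have h4 : ‖L (F z) - Complex.log z‖
        ≤ |(L (F z) - Complex.log z).re| + |(L (F z) - Complex.log z).im| := by
      exact Complex.norm_le_abs_re_add_abs_im _
    rw [hre] at h4
    rw [hK₁def]
    linarith
  have hs2 : Tendsto (fun z : ℂ => ‖z‖ * ℓ z ^ 2) l (nhds 0) := by
    have h := (aux_log_pow C₀ 2).comp hznorm_t
    simp only [hℓdef]
    exact h
  have ev_s2 : ∀ᶠ z in l, ‖z‖ * ℓ z ^ 2 ≤ 1/30 :=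
    hs2.eventually_le_const (by norm_num)
  have ev_E : ∀ᶠ z in l, ‖E z‖ ≤ 6 * ℓ z := by
    filter_upwards [ev_LF, evF, ev_zsmall] with z h1 h2 h3
    have hEz : E z = 2*c*(L (F z) + 1) - 2*F z := by simp only [hEdef]
    have h4 : ‖E z‖ ≤ ‖2*c*(L (F z) + 1)‖ + ‖2*F z‖ := by
      rw [hEz]; exact norm_sub_le _ _
    have h5 : ‖2*c*(L (F z) + 1)‖ = 2 * ‖c‖ * ‖L (F z) + 1‖ := by
      simp [norm_mul]
    have h6 : ‖L (F z) + 1‖ ≤ ℓ z + 1 := by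
      refine (norm_add_le _ _).trans ?_
      simp only [norm_one]
      linarith
    have h7 : ‖2*F z‖ = 2 * ‖F z‖ := by simp [norm_mul]
    have h8 : ‖F z‖ ≤ 1 := by linarith [h2.2]
    have h9 := hℓ1 z
    have h10 : (0:ℝ) ≤ ‖c‖ := norm_nonneg _
    have h11 : ‖c‖*‖L (F z) + 1‖ ≤ 1*(ℓ z + 1) :=
      mul_le_mul hc h6 (norm_nonneg _) zero_le_one
    nlinarith
  have ev_B : ∀ᶠ z in l, 1 ≤ ‖2*Complex.I - z*E z‖ := by
    filter_upwards [ev_E, ev_s2, evU] with z h1 h2 hz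
    have h3 : ‖z*E z‖ = ‖z‖*‖E z‖ := norm_mul _ _
    have h9 := hℓ1 z
    have hz0 : (0:ℝ) ≤ ‖z‖ := norm_nonneg _
    have h4 : ‖z‖*‖E z‖ ≤ 6 * (‖z‖ * ℓ z ^ 2) := by
      have ha := mul_le_mul_of_nonneg_left h1 hz0
      nlinarith [mul_nonneg (mul_nonneg hz0 (by linarith : (0:ℝ) ≤ ℓ z))
        (by linarith : (0:ℝ) ≤ ℓ z - 1)]
    have h5 := norm_sub_norm_le (2*Complex.I) (z*E z)
    have h6 : ‖2*Complex.I‖ = 2 := by simp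
    nlinarith
  have ev_D : ∀ᶠ z in l, deriv F z = A z / (2*Complex.I - z*E z) := by
    filter_upwards [evU, ev_B] with z hz hB
    have hBne : (2*Complex.I - z*E z) ≠ 0 := by
      intro h
      rw [h, norm_zero] at hB
      linarith
    rw [eq_div_iff hBne]
    have hid := aux_deriv_id c V hVopen hV0 L hLhol hLexp U hUopen F hFhol hFV
      (by intro u hu; have h := hkey u hu; simp only [hAdef] at h; exact h) hz
    simp only [hAdef, hEdef]
    linear_combination hid
  -- main estimate
  have main : ∀ᶠ z in l, ‖deriv F z - 1/(2*Complex.I) + c*z*Complex.log z‖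
      ≤ (2*K₁ + 5) * ‖z‖ := by
    filter_upwards [evU, ev_D, ev_B, ev_K, ev_LF, evF, ev_zsmall, ev_s2, ev_E]
      with z hz hD hB hK hLF hf hzs hs hE
    have hz0 : 0 < ‖z‖ := norm_pos_iff.mpr (hzne z hz)
    have hBne : (2*Complex.I - z*E z) ≠ 0 := by
      intro h; rw [h, norm_zero] at hB; linarith
    have hIne : (2*Complex.I : ℂ) ≠ 0 := by simp [Complex.I_ne_zero]
    set B : ℂ := 2*Complex.I - z*E z with hBdef
    set N : ℂ := 2*c*z*(A z - 1)*L (F z) + 4*c*z*(L (F z) - Complex.log z) + 2*c*z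
      - 2*Complex.I*(F z)^2 - 2*z*F z - 2*Complex.I*c*z^2*(Complex.log z)*(E z) with hNdef
    have hkey' : 2*Complex.I*F z = z*(1 + 2*c*F z*L (F z) - F z^2) := by
      have h := hkey z hz; simp only [hAdef] at h; exact h
    have halg : 2*Complex.I*(A z) - B + 2*Complex.I*c*z*(Complex.log z)*B = N := by
      simp only [hNdef, hBdef, hAdef, hEdef]
      linear_combination (2*c*L (F z)) * hkey' + (4*c*z*Complex.log z) * Complex.I_sq
    have hT : deriv F z - 1/(2*Complex.I) + c*z*Complex.log z = N / (2*Complex.I*B) := by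
      rw [hD, ← halg]
      field_simp
    -- bounds
    have hl1 : 1 ≤ ℓ z := hℓ1 z
    have hFle : ‖F z‖ ≤ ‖z‖ := hf.2
    have hzhalf : ‖z‖ ≤ 1/2 := le_of_lt hzs
    have hcnn : (0:ℝ) ≤ ‖c‖ := norm_nonneg _
    have hLFnn : (0:ℝ) ≤ ‖L (F z)‖ := norm_nonneg _
    have hEnn : (0:ℝ) ≤ ‖E z‖ := norm_nonneg _
    have hLogzb : ‖Complex.log z‖ ≤ 5 * ℓ z := by
      have h1 : ‖Complex.log z‖ ≤ |(Complex.log z).re| + |(Complex.log z).im| := by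
        exact Complex.norm_le_abs_re_add_abs_im _
      rw [Complex.log_re, Complex.log_im] at h1
      have h2 := Complex.abs_arg_le_pi z
      have h3 : |Real.log ‖z‖| ≤ ℓ z := by
        have h5 : ‖z‖ = ‖z‖ := rfl
        rw [h5]
        have h4 : (0:ℝ) ≤ C₀ := by
          rw [hC₀def]
          have := Real.log_nonneg (by norm_num : (1:ℝ) ≤ 4)
          linarith
        rw [hℓdef]; simp only; linarith
      have h4 := Real.pi_le_four
      linarith
    have hA1b : ‖A z - 1‖ ≤ 3*‖z‖*ℓ z := by
      have h1 : A z - 1 = 2*c*F z*L (F z) - F z^2 := by simp only [hAdef]; ring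
      rw [h1]
      have h2 : ‖2*c*F z*L (F z) - F z^2‖ ≤ ‖2*c*F z*L (F z)‖ + ‖F z^2‖ := norm_sub_le _ _
      have h3 : ‖2*c*F z*L (F z)‖ = 2*‖c‖*‖F z‖*‖L (F z)‖ := by
        simp [norm_mul]; try ring
      have h4 : ‖F z^2‖ = ‖F z‖^2 := by simp [norm_pow]
      have h5 : (0:ℝ) ≤ ‖F z‖ := norm_nonneg _
      have hFLl : ‖F z‖*‖L (F z)‖ ≤ ‖z‖*ℓ z := mul_le_mul hFle hLF hLFnn hz0.le
      have hzz : ‖F z‖^2 ≤ ‖z‖*ℓ z := by nlinarith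
      have hcb : ‖c‖*(‖F z‖*‖L (F z)‖) ≤ 1*(‖z‖*ℓ z) :=
        mul_le_mul hc hFLl (mul_nonneg h5 hLFnn) zero_le_one
      linarith [h2, h3, h4, hcb, hzz]
    have hAL1 : ‖A z - 1‖ * ‖L (F z)‖ ≤ 1 := by
      have h1 : ‖A z - 1‖ * ‖L (F z)‖ ≤ (3*‖z‖*ℓ z) * ℓ z :=
        mul_le_mul hA1b hLF hLFnn
          (mul_nonneg (mul_nonneg (by norm_num) hz0.le) (by linarith : (0:ℝ) ≤ ℓ z))
      nlinarith [h1, hs]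
    -- term bounds
    have n1 : ‖2*c*z*(A z - 1)*L (F z)‖ ≤ 2*‖z‖ := by
      have h3 : ‖2*c*z*(A z - 1)*L (F z)‖ = 2*‖c‖*‖z‖*(‖A z - 1‖*‖L (F z)‖) := by
        simp [norm_mul]; try ring
      rw [h3]
      calc 2*‖c‖*‖z‖*(‖A z - 1‖*‖L (F z)‖) ≤ 2*1*‖z‖*1 := by gcongr
        _ = 2*‖z‖ := by ring
    have n2 : ‖4*c*z*(L (F z) - Complex.log z)‖ ≤ 4*K₁*‖z‖ := by
      have h3 : ‖4*c*z*(L (F z) - Complex.log z)‖ = 4*‖c‖*‖z‖*‖L (F z) - Complex.log z‖ := by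
        simp [norm_mul]; try ring
      rw [h3]
      calc 4*‖c‖*‖z‖*‖L (F z) - Complex.log z‖ ≤ 4*1*‖z‖*K₁ := by gcongr
        _ = 4*K₁*‖z‖ := by ring
    have n3 : ‖2*c*z‖ ≤ 2*‖z‖ := by
      have h3 : ‖2*c*z‖ = 2*‖c‖*‖z‖ := by simp [norm_mul]; try ring
      rw [h3]; nlinarith
    have n4 : ‖2*Complex.I*(F z)^2‖ ≤ ‖z‖ := by
      have h3 : ‖2*Complex.I*(F z)^2‖ = 2*‖F z‖^2 := by
        simp [norm_mul, norm_pow]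
      rw [h3]; nlinarith [norm_nonneg (F z)]
    have n5 : ‖2*z*F z‖ ≤ ‖z‖ := by
      have h3 : ‖2*z*F z‖ = 2*‖z‖*‖F z‖ := by simp [norm_mul]; try ring
      rw [h3]; nlinarith
    have n6 : ‖2*Complex.I*c*z^2*(Complex.log z)*(E z)‖ ≤ 2*‖z‖ := by
      have h3 : ‖2*Complex.I*c*z^2*(Complex.log z)*(E z)‖
          = 2*‖c‖*(‖z‖*(‖z‖*‖Complex.log z‖*‖E z‖)) := by
        simp [norm_mul, norm_pow]; try ring
      rw [h3]
      have h5 : ‖z‖*‖Complex.log z‖*‖E z‖ ≤ 30*(‖z‖*ℓ z^2) := by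
        have h6 : ‖z‖*‖Complex.log z‖*‖E z‖ ≤ ‖z‖*(5*ℓ z)*(6*ℓ z) := by gcongr
        nlinarith
      have h7 : ‖z‖*‖Complex.log z‖*‖E z‖ ≤ 1 := by nlinarith
      calc 2*‖c‖*(‖z‖*(‖z‖*‖Complex.log z‖*‖E z‖)) ≤ 2*1*(‖z‖*1) := by gcongr
        _ = 2*‖z‖ := by ring
    have tri : ‖N‖ ≤ 2*‖z‖ + 4*K₁*‖z‖ + 2*‖z‖ + ‖z‖ + ‖z‖ + 2*‖z‖ := by
      rw [hNdef]
      have t1 := norm_add_le (2*c*z*(A z - 1)*L (F z)) (4*c*z*(L (F z) - Complex.log z))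
      have t2 := norm_add_le (2*c*z*(A z - 1)*L (F z) + 4*c*z*(L (F z) - Complex.log z)) (2*c*z)
      have t3 := norm_sub_le (2*c*z*(A z - 1)*L (F z) + 4*c*z*(L (F z) - Complex.log z) + 2*c*z) (2*Complex.I*(F z)^2)
      have t4 := norm_sub_le (2*c*z*(A z - 1)*L (F z) + 4*c*z*(L (F z) - Complex.log z) + 2*c*z - 2*Complex.I*(F z)^2) (2*z*F z)
      have t5 := norm_sub_le (2*c*z*(A z - 1)*L (F z) + 4*c*z*(L (F z) - Complex.log z) + 2*c*z - 2*Complex.I*(F z)^2 - 2*z*F z) (2*Complex.I*c*z^2*(Complex.log z)*(E z))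
      linarith
    have hden2 : (2:ℝ) ≤ ‖2*Complex.I*B‖ := by
      have h3 : ‖2*Complex.I*B‖ = 2*‖B‖ := by
        rw [norm_mul]
        simp
      rw [h3]; linarith
    rw [hT, norm_div]
    have hNnn : (0:ℝ) ≤ ‖N‖ := norm_nonneg _
    have hNb : ‖N‖ ≤ (4*K₁+8)*‖z‖ := by linarith
    calc ‖N‖ / ‖2*Complex.I*B‖ ≤ ((4*K₁+8)*‖z‖) / 2 := by
          apply div_le_div₀ (by positivity) hNb (by norm_num) hden2
      _ ≤ (2*K₁ + 5) * ‖z‖ := by nlinarith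
  -- conclude
  refine ⟨2*K₁ + 5, by linarith, ?_⟩
  rw [hldef, eventually_nhdsWithin_iff, Metric.eventually_nhds_iff] at main
  obtain ⟨ε, hε, hmain⟩ := main
  refine ⟨ε, hε, fun z hz hzε => ?_⟩
  exact hmain (y := z) (by rwa [dist_zero_right]) hz
end

section
/- Let I ⊆ ℝ be an open interval and fix θ₀ ∈ I. Let V ⊆ ℂ∖{0} be open with a holomorphic function L : V → ℂ satisfying exp(L(w)) = i·w on V and Im L bounded on V. For each θ ∈ I suppose 1 + 2cos(θ)·w·L(w) − w² ≠ 0 on V, set G_θ(w) = 2i·w/(1 + 2cos(θ)·w·L(w) − w²), and let F_θ : U → V be holomorphic on an open set U ⊆ ℂ∖{0} having 0 as a limit point, with G_θ(F_θ(z)) = z for all z ∈ U and F_θ(z) → 0 as z → 0 along U. Assume that for each z ∈ U the map θ ↦ F_θ(z) is differentiable at θ₀, with derivative ∂_θF_θ(z)|_{θ=θ₀}. Then, as z → 0 along U, ∂_θF_θ(z)|_{θ=θ₀} = (1/2)·sin(θ₀)·z²·Log(z) + O(z²), where Log is the principal complex logarithm. -/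
open Complex Filter


lemma deriv_identity (a b θ₀ : ℝ) (hθ₀ : θ₀ ∈ Set.Ioo a b)
    (V : Set ℂ) (hVopen : IsOpen V) (hV0 : (0 : ℂ) ∉ V)
    (L : ℂ → ℂ) (hLhol : DifferentiableOn ℂ L V)
    (hLexp : ∀ w ∈ V, Complex.exp (L w) = Complex.I * w)
    (hden : ∀ θ ∈ Set.Ioo a b, ∀ w ∈ V,
      1 + 2 * (Real.cos θ : ℂ) * w * L w - w ^ 2 ≠ 0)
    (g : ℝ → ℂ) (d z : ℂ)
    (hg : HasDerivAt g d θ₀) (hgV : ∀ θ ∈ Set.Ioo a b, g θ ∈ V)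
    (hGg : ∀ θ ∈ Set.Ioo a b,
      2 * Complex.I * g θ / (1 + 2 * (Real.cos θ : ℂ) * g θ * L (g θ) - g θ ^ 2) = z) :
    d * (1 - 2 * (Real.cos θ₀ : ℂ) * g θ₀ + g θ₀ ^ 2)
      = -2 * (Real.sin θ₀ : ℂ) * (g θ₀) ^ 2 * L (g θ₀) := by
  set w₀ := g θ₀ with hw₀
  have hw₀V : w₀ ∈ V := hgV θ₀ hθ₀
  have hw₀0 : w₀ ≠ 0 := fun h => hV0 (h ▸ hw₀V)
  -- L is differentiable at w₀ with derivative ℓ satisfying w₀ * ℓ = 1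
  have hLdiff : DifferentiableAt ℂ L w₀ :=
    (hLhol w₀ hw₀V).differentiableAt (hVopen.mem_nhds hw₀V)
  set ℓ := deriv L w₀ with hℓdef
  have hL' : HasDerivAt L ℓ w₀ := hLdiff.hasDerivAt
  have hℓ : w₀ * ℓ = 1 := by
    have hexp : HasDerivAt (fun w => Complex.exp (L w)) (Complex.exp (L w₀) * ℓ) w₀ := hL'.cexp
    have heq : (fun w => Complex.exp (L w)) =ᶠ[nhds w₀] fun w => Complex.I * w :=
      Filter.eventuallyEq_of_mem (hVopen.mem_nhds hw₀V) fun w hw => hLexp w hw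
    have hexp' : HasDerivAt (fun w : ℂ => Complex.I * w) (Complex.exp (L w₀) * ℓ) w₀ :=
      hexp.congr_of_eventuallyEq heq.symm
    have h2 : HasDerivAt (fun w : ℂ => Complex.I * w) Complex.I w₀ := by
      simpa using (hasDerivAt_id w₀).const_mul Complex.I
    have := hexp'.unique h2
    rw [hLexp w₀ hw₀V] at this
    have hI : Complex.I ≠ 0 := Complex.I_ne_zero
    -- this : I * w₀ * ℓ = I
    have h3 : Complex.I * (w₀ * ℓ) = Complex.I * 1 := by rw [mul_one]; linear_combination this
    exact mul_left_cancel₀ Complex.I_ne_zero h3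
  -- derivative of θ ↦ L (g θ)
  have hLg : HasDerivAt (fun θ : ℝ => L (g θ)) (d * ℓ) θ₀ := by
    have := (hL'.hasFDerivAt.restrictScalars ℝ).comp_hasDerivAt θ₀ hg
    simpa [Function.comp_def, mul_comm] using this
  have hcos : HasDerivAt (fun θ : ℝ => ((Real.cos θ : ℝ) : ℂ))
      ((-Real.sin θ₀ : ℝ) : ℂ) θ₀ := (Real.hasDerivAt_cos θ₀).ofReal_comp
  have hden0 : 1 + 2 * (Real.cos θ₀ : ℂ) * g θ₀ * L (g θ₀) - g θ₀ ^ 2 ≠ 0 :=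
    hden θ₀ hθ₀ (g θ₀) hw₀V
  have hpow : HasDerivAt (fun θ : ℝ => g θ ^ 2) (2 * g θ₀ * d) θ₀ := by
    have h := hg.mul hg
    have heq : (fun θ : ℝ => g θ ^ 2) = fun θ => g θ * g θ := by funext θ; ring
    rw [heq]
    exact h.congr_deriv (by ring)
  have hdenD := ((((hcos.const_mul (2 : ℂ)).mul hg).mul hLg).const_add (1 : ℂ)).sub hpow
  have hφ := (hg.const_mul (2 * Complex.I)).div hdenD hden0
  have hconst : HasDerivAt (fun θ : ℝ =>
      2 * Complex.I * g θ / (1 + 2 * (Real.cos θ : ℂ) * g θ * L (g θ) - g θ ^ 2)) 0 θ₀ := by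
    have heq : (fun θ : ℝ =>
        2 * Complex.I * g θ / (1 + 2 * (Real.cos θ : ℂ) * g θ * L (g θ) - g θ ^ 2))
        =ᶠ[nhds θ₀] fun _ => z :=
      Filter.eventuallyEq_of_mem (isOpen_Ioo.mem_nhds hθ₀) fun θ hθ => hGg θ hθ
    exact (hasDerivAt_const θ₀ z).congr_of_eventuallyEq heq
  have huniq := hφ.unique hconst
  rw [div_eq_zero_iff] at huniq
  have hnum := huniq.resolve_right (pow_ne_zero 2 hden0)
  linear_combination (norm := (push_cast [Pi.mul_apply, Pi.sub_apply]; ring1)) (-Complex.I / 2) * hnum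
    + (2 * (Real.cos θ₀ : ℂ) * d * g θ₀) * hℓ
    + (d * (1 - 2 * (Real.cos θ₀ : ℂ) * g θ₀ + g θ₀ ^ 2)
        + 2 * (Real.sin θ₀ : ℂ) * g θ₀ ^ 2 * L (g θ₀)
        + 2 * (Real.cos θ₀ : ℂ) * d * g θ₀ * (1 - g θ₀ * ℓ)) * Complex.I_sq


lemma real_aux (M' : ℝ) :
    Tendsto (fun x : ℝ => x * (M' - Real.log x) ^ 5) (nhdsWithin 0 (Set.Ioi 0)) (nhds 0) := by
  have ha : Tendsto (fun x : ℝ => Real.log x * x ^ (5⁻¹ : ℝ)) (nhdsWithin 0 (Set.Ioi 0)) (nhds 0) :=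
    tendsto_log_mul_rpow_nhdsGT_zero (by norm_num)
  have hc : Tendsto (fun x : ℝ => x ^ (5⁻¹ : ℝ)) (nhdsWithin 0 (Set.Ioi 0)) (nhds 0) := by
    have := (Real.continuousAt_rpow_const 0 (5⁻¹ : ℝ) (Or.inr (by norm_num))).tendsto
    rw [Real.zero_rpow (by norm_num)] at this
    exact this.mono_left nhdsWithin_le_nhds
  have hb : Tendsto (fun x : ℝ => (M' - Real.log x) * x ^ (5⁻¹ : ℝ))
      (nhdsWithin 0 (Set.Ioi 0)) (nhds 0) := by
    have := (hc.const_mul M').sub ha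
    simpa [sub_mul] using this
  have hp : Tendsto (fun x : ℝ => ((M' - Real.log x) * x ^ (5⁻¹ : ℝ)) ^ (5 : ℕ))
      (nhdsWithin 0 (Set.Ioi 0)) (nhds 0) := by
    have := hb.pow 5
    simpa using this
  refine hp.congr' ?_
  filter_upwards [self_mem_nhdsWithin] with x (hx : x ∈ Set.Ioi 0)
  have hx0 : (0 : ℝ) < x := hx
  rw [mul_pow, ← Real.rpow_natCast (x ^ (5⁻¹ : ℝ)) 5, ← Real.rpow_mul hx0.le]
  norm_num [mul_comm]

set_option maxHeartbeats 1000000 in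
/-- **`θ`-derivative asymptotics of the family `𝔣_θ` of geodesic-pair maps.** Let `L` be a
holomorphic branch of `log(i·w)` with bounded imaginary part on an open set `V ⊆ ℂ ∖ {0}`.
For each `θ` in an open interval `I = (a, b)` suppose `1 + 2 cos θ · w L(w) − w² ≠ 0` on
`V`, and let `F θ : U → V` be a holomorphic right inverse of
`G_θ(w) = 2i w/(1 + 2 cos θ · w L(w) − w²)` on an open set `U ⊆ ℂ ∖ {0}` having `0` as a
limit point, with `F θ z → 0` as `z → 0` along `U`. If for each `z ∈ U` the map
`θ ↦ F θ z` is differentiable at `θ₀ ∈ I` with derivative `Fd z`, then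
`Fd z = (1/2) sin θ₀ · z² Log z + O(z²)` as `z → 0` along `U`. -/
theorem geodesic_pair_theta_derivative_asymptotics
    (a b θ₀ : ℝ) (hθ₀ : θ₀ ∈ Set.Ioo a b)
    (V : Set ℂ) (hVopen : IsOpen V) (hV0 : (0 : ℂ) ∉ V)
    (L : ℂ → ℂ) (hLhol : DifferentiableOn ℂ L V)
    (hLexp : ∀ w ∈ V, Complex.exp (L w) = Complex.I * w)
    (hLbd : ∃ M : ℝ, ∀ w ∈ V, |(L w).im| ≤ M)
    (U : Set ℂ) (hUopen : IsOpen U) (hU0 : (0 : ℂ) ∉ U) (hacc : (0 : ℂ) ∈ closure U)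
    (F : ℝ → ℂ → ℂ)
    (hden : ∀ θ ∈ Set.Ioo a b, ∀ w ∈ V,
      1 + 2 * (Real.cos θ : ℂ) * w * L w - w ^ 2 ≠ 0)
    (hFhol : ∀ θ ∈ Set.Ioo a b, DifferentiableOn ℂ (F θ) U)
    (hFV : ∀ θ ∈ Set.Ioo a b, ∀ z ∈ U, F θ z ∈ V)
    (hGF : ∀ θ ∈ Set.Ioo a b, ∀ z ∈ U,
      2 * Complex.I * F θ z /
        (1 + 2 * (Real.cos θ : ℂ) * F θ z * L (F θ z) - (F θ z) ^ 2) = z)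
    (hFlim : ∀ θ ∈ Set.Ioo a b, Tendsto (F θ) (nhdsWithin 0 U) (nhds 0))
    (Fd : ℂ → ℂ)
    (hFd : ∀ z ∈ U, HasDerivAt (fun θ : ℝ => F θ z) (Fd z) θ₀) :
    ∃ C > (0 : ℝ), ∃ δ > (0 : ℝ), ∀ z ∈ U, ‖z‖ < δ →
      ‖Fd z - (1 / 2 : ℂ) * (Real.sin θ₀ : ℂ) * z ^ 2 * Complex.log z‖
        ≤ C * ‖z‖ ^ 2 := by
  obtain ⟨M₀, hM⟩ := hLbd
  set M' : ℝ := |M₀| + 1 with hM'def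
  have hM'1 : 1 ≤ M' := by have := abs_nonneg M₀; linarith
  have hπ : (0:ℝ) < Real.pi := Real.pi_pos
  have hπ4 : Real.pi ≤ 4 := Real.pi_le_four
  refine ⟨M' + Real.pi + 5, by linarith, ?_⟩
  have hwlim : Tendsto (fun z => F θ₀ z) (nhdsWithin 0 U) (nhds 0) := hFlim θ₀ hθ₀
  have hnormlim : Tendsto (fun z => ‖F θ₀ z‖) (nhdsWithin 0 U)
      (nhdsWithin 0 (Set.Ioi 0)) := by
    rw [tendsto_nhdsWithin_iff]
    refine ⟨by simpa using hwlim.norm, ?_⟩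
    filter_upwards [self_mem_nhdsWithin] with z hz
    have h1 : F θ₀ z ∈ V := hFV θ₀ hθ₀ z hz
    have h2 : F θ₀ z ≠ 0 := fun h => hV0 (h ▸ h1)
    simpa [Set.mem_Ioi, norm_pos_iff] using h2
  have hqlim : Tendsto (fun z => ‖F θ₀ z‖ * (M' - Real.log ‖F θ₀ z‖) ^ 5)
      (nhdsWithin 0 U) (nhds 0) := (real_aux M').comp hnormlim
  have hqev : ∀ᶠ z in nhdsWithin 0 U,
      ‖F θ₀ z‖ * (M' - Real.log ‖F θ₀ z‖) ^ 5 ≤ 1/100 := by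
    have : Set.Iio (1/100 : ℝ) ∈ nhds (0:ℝ) := Iio_mem_nhds (by norm_num)
    filter_upwards [hqlim.eventually this] with z hz using le_of_lt hz
  have hwsm : ∀ᶠ z in nhdsWithin 0 U, ‖F θ₀ z‖ < 1/2 := by
    have : Metric.ball (0:ℂ) (1/2) ∈ nhds (0:ℂ) := Metric.ball_mem_nhds _ (by norm_num)
    filter_upwards [hwlim.eventually this] with z hz
    simpa [Metric.mem_ball, dist_zero_right] using hz
  have hev : ∀ᶠ z in nhdsWithin 0 U,
      ‖Fd z - (1 / 2 : ℂ) * (Real.sin θ₀ : ℂ) * z ^ 2 * Complex.log z‖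
        ≤ (M' + Real.pi + 5) * ‖z‖ ^ 2 := by
    filter_upwards [self_mem_nhdsWithin, hqev, hwsm] with z hzU hq hwsmall
    set w₀ := F θ₀ z with hw₀def
    have hwV : w₀ ∈ V := hFV θ₀ hθ₀ z hzU
    have hw0 : w₀ ≠ 0 := fun h => hV0 (h ▸ hwV)
    have hz0 : z ≠ 0 := fun h => hU0 (h ▸ hzU)
    have hwpos : 0 < ‖w₀‖ := norm_pos_iff.mpr hw0
    have hzpos : 0 < ‖z‖ := norm_pos_iff.mpr hz0
    set Λ : ℝ := M' - Real.log ‖w₀‖ with hΛdef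
    have hlog0 : Real.log ‖w₀‖ ≤ 0 := Real.log_nonpos (norm_nonneg _) (by linarith)
    have hΛ1 : (1:ℝ) ≤ Λ := by rw [hΛdef]; linarith
    have hΛ0 : (0:ℝ) ≤ Λ := by linarith
    set q : ℝ := ‖w₀‖ * Λ ^ 5 with hqdef
    have hΛ5 : (1:ℝ) ≤ Λ ^ 5 := by
      calc (1:ℝ) = 1 ^ 5 := by norm_num
      _ ≤ Λ ^ 5 := pow_le_pow_left₀ (by norm_num) hΛ1 5
    have hΛΛ5 : Λ ≤ Λ ^ 5 := by
      calc Λ = Λ ^ 1 := (pow_one Λ).symm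
      _ ≤ Λ ^ 5 := pow_le_pow_right₀ hΛ1 (by norm_num)
    have hΛ2Λ5 : Λ ^ 2 ≤ Λ ^ 5 := pow_le_pow_right₀ hΛ1 (by norm_num)
    have hwq : ‖w₀‖ ≤ q := (le_mul_iff_one_le_right hwpos).mpr hΛ5
    have hwΛq : ‖w₀‖ * Λ ≤ q := by
      rw [hqdef]; exact mul_le_mul_of_nonneg_left hΛΛ5 (norm_nonneg _)
    have hwΛ2q : ‖w₀‖ * Λ ^ 2 ≤ q := by
      rw [hqdef]; exact mul_le_mul_of_nonneg_left hΛ2Λ5 (norm_nonneg _)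
    have hq100 : q ≤ 1/100 := hq
    have hqpos : 0 < q := by
      apply mul_pos hwpos; positivity
    -- real part of L w₀
    have hLre : (L w₀).re = Real.log ‖w₀‖ := by
      have h1 : ‖Complex.exp (L w₀)‖ = ‖Complex.I * w₀‖ := by
        rw [hLexp w₀ hwV]
      rw [Complex.norm_exp, norm_mul, Complex.norm_I, one_mul] at h1
      have h2 := congrArg Real.log h1
      rw [Real.log_exp] at h2
      exact h2
    have hLim : |(L w₀).im| ≤ M' - 1 := by
      have := (hM w₀ hwV).trans (le_abs_self M₀)
      rw [hM'def]; linarith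
    have hLnorm : ‖L w₀‖ ≤ Λ := by
      calc ‖L w₀‖ ≤ |(L w₀).re| + |(L w₀).im| := by
            exact Complex.norm_le_abs_re_add_abs_im _
      _ ≤ -Real.log ‖w₀‖ + (M' - 1) := by
            rw [hLre, abs_of_nonpos hlog0]; linarith
      _ ≤ Λ := by rw [hΛdef]; linarith
    -- denominator facts
    have hGFz := hGF θ₀ hθ₀ z hzU
    have hden0 : (1 + 2 * (Real.cos θ₀ : ℂ) * w₀ * L w₀ - w₀ ^ 2) ≠ 0 :=
      hden θ₀ hθ₀ w₀ hwV
    set D : ℂ := 1 + 2 * (Real.cos θ₀ : ℂ) * w₀ * L w₀ - w₀ ^ 2 with hDdef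
    have hzD : 2 * Complex.I * w₀ = z * D := (div_eq_iff hden0).mp hGFz
    have hnormeq : 2 * ‖w₀‖ = ‖z‖ * ‖D‖ := by
      have h1 := congrArg norm hzD
      simpa [norm_mul, Complex.norm_I] using h1
    have hDpos : 0 < ‖D‖ := by
      rcases lt_or_ge 0 ‖D‖ with h | h
      · exact h
      · exfalso; nlinarith
    have hcos1 : |Real.cos θ₀| ≤ 1 := Real.abs_cos_le_one θ₀
    have hw2w : ‖w₀‖ ^ 2 ≤ ‖w₀‖ := by nlinarith
    have hD1 : ‖D - 1‖ ≤ 2 * (‖w₀‖ * Λ) + ‖w₀‖ ^ 2 := by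
      have hre : D - 1 = 2 * (Real.cos θ₀ : ℂ) * w₀ * L w₀ - w₀ ^ 2 := by
        rw [hDdef]; ring
      rw [hre]
      calc ‖2 * (Real.cos θ₀ : ℂ) * w₀ * L w₀ - w₀ ^ 2‖
          ≤ ‖2 * (Real.cos θ₀ : ℂ) * w₀ * L w₀‖ + ‖w₀ ^ 2‖ := norm_sub_le _ _
      _ = 2 * |Real.cos θ₀| * ‖w₀‖ * ‖L w₀‖ + ‖w₀‖ ^ 2 := by
            simp only [norm_mul, norm_pow, Complex.norm_real, RCLike.norm_ofNat, Real.norm_eq_abs]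
      _ ≤ 2 * (‖w₀‖ * Λ) + ‖w₀‖ ^ 2 := by
            have h1 : 2 * |Real.cos θ₀| * ‖w₀‖ * ‖L w₀‖ ≤ 2 * 1 * ‖w₀‖ * Λ := by
              apply mul_le_mul (by nlinarith [norm_nonneg w₀]) hLnorm (norm_nonneg _)
              positivity
            linarith
    have hD1q : ‖D - 1‖ ≤ 3 * q := by
      have : ‖w₀‖ ^ 2 ≤ q := hw2w.trans hwq
      linarith
    have hDub : ‖D‖ ≤ 2 := by
      calc ‖D‖ = ‖(D - 1) + 1‖ := by ring_nf
      _ ≤ ‖D - 1‖ + ‖(1:ℂ)‖ := norm_add_le _ _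
      _ ≤ 2 := by rw [norm_one]; linarith
    have hDlb : (1:ℝ)/2 ≤ ‖D‖ := by
      have h1 : ‖(1:ℂ)‖ - ‖D - 1‖ ≤ ‖D‖ := by
        have := norm_sub_norm_le (1:ℂ) (1 - D)
        simpa [norm_sub_rev] using norm_sub_norm_le (1:ℂ) (1 - D)
      rw [norm_one] at h1
      linarith
    have hDp1 : ‖D + 1‖ ≤ 3 := by
      calc ‖D + 1‖ ≤ ‖D‖ + ‖(1:ℂ)‖ := norm_add_le _ _
      _ ≤ 3 := by rw [norm_one]; linarith
    -- e1
    have he1 : ‖(D ^ 2 - 1) * L w₀‖ ≤ 9 * q := by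
      have hfac : (D ^ 2 - 1) * L w₀ = (D - 1) * ((D + 1) * L w₀) := by ring
      rw [hfac, norm_mul, norm_mul]
      have h2 : ‖D + 1‖ * ‖L w₀‖ ≤ 3 * Λ :=
        mul_le_mul hDp1 hLnorm (norm_nonneg _) (by norm_num)
      calc ‖D - 1‖ * (‖D + 1‖ * ‖L w₀‖)
          ≤ (2 * (‖w₀‖ * Λ) + ‖w₀‖ ^ 2) * (3 * Λ) := by
            apply mul_le_mul hD1 h2 (by positivity) (by positivity)
      _ = 6 * (‖w₀‖ * Λ ^ 2) + 3 * (‖w₀‖ ^ 2 * Λ) := by ring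
      _ ≤ 6 * q + 3 * q := by
            have h3 : ‖w₀‖ ^ 2 * Λ ≤ ‖w₀‖ * Λ :=
              mul_le_mul_of_nonneg_right hw2w hΛ0
            have h4 : ‖w₀‖ ^ 2 * Λ ≤ q := h3.trans hwΛq
            linarith
      _ = 9 * q := by ring
    -- bound on log ‖z‖
    have hlog2 : Real.log 2 ≤ 1 := by
      have := Real.log_two_lt_d9
      linarith
    have hlogD : |Real.log ‖D‖| ≤ Real.log 2 := by
      rw [abs_le]
      constructor
      · have h1 : Real.log (1/2) ≤ Real.log ‖D‖ := Real.log_le_log (by norm_num) hDlb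
        rw [show (1:ℝ)/2 = 2⁻¹ by norm_num, Real.log_inv] at h1
        linarith
      · exact Real.log_le_log hDpos hDub
    have hlogzw : Real.log ‖z‖ = Real.log 2 + Real.log ‖w₀‖ - Real.log ‖D‖ := by
      have h1 : ‖z‖ = 2 * ‖w₀‖ / ‖D‖ := by
        rw [eq_div_iff (ne_of_gt hDpos)]
        linarith [hnormeq]
      rw [h1, Real.log_div (by positivity) (by positivity),
        Real.log_mul (by norm_num) (by positivity)]
    have hlogz : |Real.log ‖z‖| ≤ 1 + Λ := by
      rw [hlogzw]
      have h1 : |Real.log 2 + Real.log ‖w₀‖ - Real.log ‖D‖|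
          ≤ Real.log 2 + |Real.log ‖w₀‖| + |Real.log ‖D‖| := by
        have := abs_add_le (Real.log 2 + Real.log ‖w₀‖) (-Real.log ‖D‖)
        have h2 := abs_add_le (Real.log 2) (Real.log ‖w₀‖)
        have h3 : |Real.log 2| = Real.log 2 := abs_of_nonneg (Real.log_nonneg (by norm_num))
        rw [abs_neg] at this
        calc |Real.log 2 + Real.log ‖w₀‖ - Real.log ‖D‖|
            = |(Real.log 2 + Real.log ‖w₀‖) + -Real.log ‖D‖| := by ring_nf
        _ ≤ |Real.log 2 + Real.log ‖w₀‖| + |Real.log ‖D‖| := this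
        _ ≤ Real.log 2 + |Real.log ‖w₀‖| + |Real.log ‖D‖| := by linarith [h2, h3]
      have h4 : |Real.log ‖w₀‖| = -Real.log ‖w₀‖ := abs_of_nonpos hlog0
      rw [h4] at h1
      have : Real.log 2 + -Real.log ‖w₀‖ + |Real.log ‖D‖| ≤ 1 + Λ := by
        rw [hΛdef]; linarith
      linarith
    have hLogznorm : ‖Complex.log z‖ ≤ (1 + Λ) + Real.pi := by
      calc ‖Complex.log z‖ ≤ |(Complex.log z).re| + |(Complex.log z).im| := by
            exact Complex.norm_le_abs_re_add_abs_im _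
      _ ≤ (1 + Λ) + Real.pi := by
            rw [Complex.log_re, Complex.log_im]
            have h1 : |z.arg| ≤ Real.pi := Complex.abs_arg_le_pi z
            have h2 : |Real.log ‖z‖| ≤ 1 + Λ := by
              exact hlogz
            linarith
    -- e2
    have he2 : ‖(2 * (Real.cos θ₀ : ℂ) * w₀ - w₀ ^ 2) * Complex.log z‖ ≤ 18 * q := by
      rw [norm_mul]
      have h1 : ‖2 * (Real.cos θ₀ : ℂ) * w₀ - w₀ ^ 2‖ ≤ 3 * ‖w₀‖ := by
        calc ‖2 * (Real.cos θ₀ : ℂ) * w₀ - w₀ ^ 2‖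
            ≤ ‖2 * (Real.cos θ₀ : ℂ) * w₀‖ + ‖w₀ ^ 2‖ := norm_sub_le _ _
        _ = 2 * |Real.cos θ₀| * ‖w₀‖ + ‖w₀‖ ^ 2 := by
              simp only [norm_mul, norm_pow, Complex.norm_real, RCLike.norm_ofNat, Real.norm_eq_abs]
        _ ≤ 3 * ‖w₀‖ := by nlinarith [norm_nonneg w₀]
      have h2 : (1 + Λ) + Real.pi ≤ 6 * Λ := by
        have : (1:ℝ) + Λ ≤ 2 * Λ := by linarith
        linarith
      calc ‖2 * (Real.cos θ₀ : ℂ) * w₀ - w₀ ^ 2‖ * ‖Complex.log z‖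
          ≤ (3 * ‖w₀‖) * (6 * Λ) := by
            apply mul_le_mul h1 (hLogznorm.trans h2) (norm_nonneg _) (by positivity)
      _ = 18 * (‖w₀‖ * Λ) := by ring
      _ ≤ 18 * q := by linarith
    -- e3
    have he3 : ‖L w₀ - Complex.log z‖ ≤ M' + Real.pi + 2 := by
      calc ‖L w₀ - Complex.log z‖
          ≤ |(L w₀ - Complex.log z).re| + |(L w₀ - Complex.log z).im| := by
            exact Complex.norm_le_abs_re_add_abs_im _
      _ ≤ M' + Real.pi + 2 := by
            have hre : (L w₀ - Complex.log z).re = Real.log ‖D‖ - Real.log 2 := by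
              simp only [Complex.sub_re, Complex.log_re, hLre]
              rw [hlogzw]; ring
            have him : (L w₀ - Complex.log z).im = (L w₀).im - z.arg := by
              simp [Complex.sub_im, Complex.log_im]
            have h1 : |(L w₀ - Complex.log z).re| ≤ 2 := by
              rw [hre]
              have := abs_sub (Real.log ‖D‖) (Real.log 2)
              have h2 : |Real.log ‖D‖ - Real.log 2| ≤ |Real.log ‖D‖| + |Real.log 2| :=
                abs_sub _ _
              have h3 : |Real.log 2| = Real.log 2 :=
                abs_of_nonneg (Real.log_nonneg (by norm_num))
              rw [h3] at h2
              linarith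
            have h4 : |(L w₀ - Complex.log z).im| ≤ (M' - 1) + Real.pi := by
              rw [him]
              have := abs_sub (L w₀).im z.arg
              have h5 : |(L w₀).im - z.arg| ≤ |(L w₀).im| + |z.arg| := abs_sub _ _
              have h6 : |z.arg| ≤ Real.pi := Complex.abs_arg_le_pi z
              linarith
            linarith
    -- combine E
    set A : ℂ := 1 - 2 * (Real.cos θ₀ : ℂ) * w₀ + w₀ ^ 2 with hAdef
    have hE : ‖D ^ 2 * L w₀ - A * Complex.log z‖ ≤ M' + Real.pi + 4 := by
      have hsplit : D ^ 2 * L w₀ - A * Complex.log z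
          = (D ^ 2 - 1) * L w₀
            + ((2 * (Real.cos θ₀ : ℂ) * w₀ - w₀ ^ 2) * Complex.log z
              + (L w₀ - Complex.log z)) := by
        rw [hAdef]; ring
      rw [hsplit]
      calc ‖(D ^ 2 - 1) * L w₀
            + ((2 * (Real.cos θ₀ : ℂ) * w₀ - w₀ ^ 2) * Complex.log z
              + (L w₀ - Complex.log z))‖
          ≤ ‖(D ^ 2 - 1) * L w₀‖
            + (‖(2 * (Real.cos θ₀ : ℂ) * w₀ - w₀ ^ 2) * Complex.log z‖
              + ‖L w₀ - Complex.log z‖) :=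
            (norm_add_le _ _).trans (by gcongr; exact norm_add_le _ _)
      _ ≤ 9 * q + (18 * q + (M' + Real.pi + 2)) := by gcongr
      _ ≤ M' + Real.pi + 4 := by linarith
    have hA1 : ‖A - 1‖ ≤ 3 * ‖w₀‖ := by
      have hre : A - 1 = -(2 * (Real.cos θ₀ : ℂ) * w₀ - w₀ ^ 2) := by rw [hAdef]; ring
      rw [hre, norm_neg]
      calc ‖2 * (Real.cos θ₀ : ℂ) * w₀ - w₀ ^ 2‖
          ≤ ‖2 * (Real.cos θ₀ : ℂ) * w₀‖ + ‖w₀ ^ 2‖ := norm_sub_le _ _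
      _ = 2 * |Real.cos θ₀| * ‖w₀‖ + ‖w₀‖ ^ 2 := by
            simp only [norm_mul, norm_pow, Complex.norm_real, RCLike.norm_ofNat, Real.norm_eq_abs]
      _ ≤ 3 * ‖w₀‖ := by nlinarith [norm_nonneg w₀]
    have hAlb : (1:ℝ)/2 ≤ ‖A‖ := by
      have h1 : ‖(1:ℂ)‖ - ‖A - 1‖ ≤ ‖A‖ := by
        simpa [norm_sub_rev] using norm_sub_norm_le (1:ℂ) (1 - A)
      rw [norm_one] at h1
      have : 3 * ‖w₀‖ ≤ 3 * q := by linarith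
      linarith
    -- the derivative identity
    have hid : Fd z * A = -2 * (Real.sin θ₀ : ℂ) * w₀ ^ 2 * L w₀ := by
      have := deriv_identity a b θ₀ hθ₀ V hVopen hV0 L hLhol hLexp hden
        (fun θ => F θ z) (Fd z) z (hFd z hzU)
        (fun θ hθ => hFV θ hθ z hzU) (fun θ hθ => hGF θ hθ z hzU)
      rw [hAdef]
      simpa using this
    have hTA : (Fd z - (1 / 2 : ℂ) * (Real.sin θ₀ : ℂ) * z ^ 2 * Complex.log z) * A
        = (1 / 2 : ℂ) * (Real.sin θ₀ : ℂ) * z ^ 2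
            * (D ^ 2 * L w₀ - A * Complex.log z) := by
      linear_combination hid
        + ((Real.sin θ₀ : ℂ) * L w₀ / 2 * (z * D + 2 * Complex.I * w₀)) * hzD
        + (-2 * (Real.sin θ₀ : ℂ) * L w₀ * w₀ ^ 2) * Complex.I_sq
    -- final norm estimate
    have hTnorm : ‖Fd z - (1 / 2 : ℂ) * (Real.sin θ₀ : ℂ) * z ^ 2 * Complex.log z‖ * ‖A‖
        ≤ 1 / 2 * ‖z‖ ^ 2 * (M' + Real.pi + 4) := by
      have h1 := congrArg norm hTA
      rw [norm_mul] at h1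
      rw [h1]
      have h2 : ‖(1 / 2 : ℂ) * (Real.sin θ₀ : ℂ) * z ^ 2
          * (D ^ 2 * L w₀ - A * Complex.log z)‖
          = 1 / 2 * |Real.sin θ₀| * ‖z‖ ^ 2 * ‖D ^ 2 * L w₀ - A * Complex.log z‖ := by
        simp only [norm_mul, norm_pow, Complex.norm_real, Complex.norm_I, RCLike.norm_ofNat, Real.norm_eq_abs, norm_div, norm_one]
      rw [h2]
      have h3 : |Real.sin θ₀| ≤ 1 := Real.abs_sin_le_one θ₀
      have h5 : 1 / 2 * |Real.sin θ₀| * ‖z‖ ^ 2 * ‖D ^ 2 * L w₀ - A * Complex.log z‖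
          ≤ 1 / 2 * 1 * ‖z‖ ^ 2 * (M' + Real.pi + 4) := by
        gcongr
      linarith
    have h6 : ‖Fd z - (1 / 2 : ℂ) * (Real.sin θ₀ : ℂ) * z ^ 2 * Complex.log z‖ * (1/2)
        ≤ ‖Fd z - (1 / 2 : ℂ) * (Real.sin θ₀ : ℂ) * z ^ 2 * Complex.log z‖ * ‖A‖ :=
      mul_le_mul_of_nonneg_left hAlb (norm_nonneg _)
    have h5 : (0:ℝ) ≤ ‖z‖ ^ 2 := by positivity
    have h7 : (0:ℝ) ≤ ‖z‖ ^ 2 * (M' + Real.pi + 4) := by positivity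
    linarith
  rw [eventually_nhdsWithin_iff, Metric.eventually_nhds_iff] at hev
  obtain ⟨δ, hδ, h⟩ := hev
  exact ⟨δ, hδ, fun z hz hzδ => h (by simpa [dist_zero_right] using hzδ) hz⟩
end

section
/- Let 0 ≤ θ < π/2. There exists an analytic function q : 𝔻∖{0} → ℂ (𝔻 the open unit disc) with the following properties: (a) for every open connected set U ⊆ 𝔻∖{0} admitting a holomorphic function L : U → ℂ with exp(L(z)) = i·z for all z ∈ U, the function h(z) = (1/2)(i z + 1/(i z)) − i cos(θ)·L(z) is holomorphic on U with nowhere-vanishing derivative, and q coincides with the Schwarzian derivative S[h] = h'''/h' − (3/2)(h''/h')² on U (in particular q is independent of the branch L); (b) q has a simple pole at 0 with residue −4cos(θ), i.e., lim_{z→0} z·q(z) = −4cos(θ). -/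
open Complex Filter

/-- The Schwarzian derivative `S[f] = f'''/f' − (3/2)(f''/f')²`. -/
noncomputable def schwarzian (f : ℂ → ℂ) (z : ℂ) : ℂ :=
  deriv (deriv (deriv f)) z / deriv f z - (3 / 2) * (deriv (deriv f) z / deriv f z) ^ 2

/-- **The Schwarzian of the geodesic-pair uniformizing map `h_θ` has a simple pole at `0`
with residue `−4 cos θ`.** There is a single-valued analytic function `q` on `𝔻 ∖ {0}`
which, on every open connected `U ⊆ 𝔻 ∖ {0}` carrying a holomorphic branch `L` of
`log(i z)`, agrees with the Schwarzian of
`h(z) = (1/2)(i z + 1/(i z)) − i cos θ · L(z)` (which is holomorphic on `U` with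
nowhere-vanishing derivative), and `z · q(z) → −4 cos θ` as `z → 0`. -/
theorem schwarzian_of_geodesic_pair_simple_pole
    (θ : ℝ) (hθ0 : 0 ≤ θ) (hθ : θ < Real.pi / 2) :
    ∃ q : ℂ → ℂ,
      AnalyticOnNhd ℂ q (Metric.ball (0 : ℂ) 1 \ {0}) ∧
      (∀ U : Set ℂ, IsOpen U → IsConnected U → U ⊆ Metric.ball (0 : ℂ) 1 \ {0} →
        ∀ L : ℂ → ℂ, DifferentiableOn ℂ L U →
          (∀ z ∈ U, Complex.exp (L z) = Complex.I * z) →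
          DifferentiableOn ℂ
            (fun z => (1 / 2 : ℂ) * (Complex.I * z + 1 / (Complex.I * z)) -
              Complex.I * (Real.cos θ : ℂ) * L z) U ∧
          (∀ z ∈ U,
            deriv (fun z => (1 / 2 : ℂ) * (Complex.I * z + 1 / (Complex.I * z)) -
              Complex.I * (Real.cos θ : ℂ) * L z) z ≠ 0) ∧
          (∀ z ∈ U,
            q z = schwarzian (fun z => (1 / 2 : ℂ) * (Complex.I * z + 1 / (Complex.I * z)) -
              Complex.I * (Real.cos θ : ℂ) * L z) z)) ∧
      Tendsto (fun z => z * q z) (nhdsWithin (0 : ℂ) {(0 : ℂ)}ᶜ)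
        (nhds (-4 * (Real.cos θ : ℂ))) := by
  set c : ℂ := (Real.cos θ : ℂ) with hc
  -- the polynomial `z² − 2cz + 1` has its roots `e^{±iθ}` on the unit circle
  have hP : ∀ z : ℂ, z ∈ Metric.ball (0 : ℂ) 1 → z ^ 2 - 2 * c * z + 1 ≠ 0 := by
    intro z hz h0
    have hzlt : ‖z‖ < 1 := by simpa using Metric.mem_ball.mp hz
    have hs : (Real.sin θ : ℂ) ^ 2 + (Real.cos θ : ℂ) ^ 2 = 1 := by
      norm_cast; exact Real.sin_sq_add_cos_sq θ
    have hfac : z ^ 2 - 2 * c * z + 1 =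
        (z - ((Real.cos θ : ℂ) + (Real.sin θ : ℂ) * Complex.I)) *
        (z - ((Real.cos θ : ℂ) - (Real.sin θ : ℂ) * Complex.I)) := by
      have hI : (Complex.I : ℂ) ^ 2 = -1 := Complex.I_sq
      rw [hc]
      linear_combination ((Real.sin θ : ℂ) ^ 2) * hI - hs
    rw [hfac, mul_eq_zero] at h0
    have hone : ∀ s : ℝ, s ^ 2 = Real.sin θ ^ 2 →
        ‖(Real.cos θ : ℂ) + (s : ℂ) * Complex.I‖ = 1 := by
      intro s hs2
      rw [Complex.norm_add_mul_I, hs2]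
      rw [add_comm, Real.sin_sq_add_cos_sq, Real.sqrt_one]
    rcases h0 with h0 | h0
    · have hz1 : z = (Real.cos θ : ℂ) + (Real.sin θ : ℂ) * Complex.I := sub_eq_zero.mp h0
      rw [hz1, hone (Real.sin θ) rfl] at hzlt
      exact absurd hzlt (lt_irrefl 1)
    · have hz1 : z = (Real.cos θ : ℂ) + ((-Real.sin θ : ℝ) : ℂ) * Complex.I := by
        have := sub_eq_zero.mp h0
        rw [this]; push_cast; ring
      rw [hz1, hone (-Real.sin θ) (by ring)] at hzlt
      exact absurd hzlt (lt_irrefl 1)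
  -- the single-valued candidate for the Schwarzian
  set N : ℂ → ℂ := fun z => -4 * c * z ^ 2 + (6 + 2 * c ^ 2) * z - 4 * c with hN
  set q : ℂ → ℂ := fun z => N z / (z * (z ^ 2 - 2 * c * z + 1) ^ 2) with hq
  -- explicit derivatives of h (independent of the branch L)
  set g1 : ℂ → ℂ := fun w => Complex.I * (w ^ 2 - 2 * c * w + 1) / (2 * w ^ 2) with hg1def
  set g2 : ℂ → ℂ := fun w => Complex.I * (c * w - 1) / w ^ 3 with hg2def
  set g3 : ℂ → ℂ := fun w => Complex.I * (3 - 2 * c * w) / w ^ 4 with hg3def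
  have hg1 : ∀ z : ℂ, z ≠ 0 → HasDerivAt g1 (g2 z) z := by
    intro z hz0
    have hnum : HasDerivAt (fun w : ℂ => Complex.I * (w ^ 2 - 2 * c * w + 1))
        (Complex.I * (2 * z - 2 * c)) z := by
      have := (((hasDerivAt_pow 2 z).sub ((hasDerivAt_id z).const_mul (2 * c))).add_const
        (1 : ℂ)).const_mul Complex.I
      simpa [mul_comm] using this
    have hden : HasDerivAt (fun w : ℂ => 2 * w ^ 2) (2 * (2 * z)) z := by
      simpa [mul_comm] using (hasDerivAt_pow 2 z).const_mul (2 : ℂ)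
    have h2z : (2 : ℂ) * z ^ 2 ≠ 0 := by
      simp [pow_eq_zero_iff, hz0]
    have := hnum.div hden h2z
    refine this.congr_deriv ?_
    rw [hg2def]
    field_simp
    ring
  have hg2 : ∀ z : ℂ, z ≠ 0 → HasDerivAt g2 (g3 z) z := by
    intro z hz0
    have hnum : HasDerivAt (fun w : ℂ => Complex.I * (c * w - 1)) (Complex.I * c) z := by
      have := (((hasDerivAt_id z).const_mul c).sub_const (1 : ℂ)).const_mul Complex.I
      simpa [mul_comm] using this
    have hden : HasDerivAt (fun w : ℂ => w ^ 3) (3 * z ^ 2) z := by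
      simpa using hasDerivAt_pow 3 z
    have h3z : z ^ 3 ≠ 0 := pow_ne_zero 3 hz0
    have := hnum.div hden h3z
    refine this.congr_deriv ?_
    rw [hg3def]
    field_simp
    ring
  refine ⟨q, ?_, ?_, ?_⟩
  · -- analyticity on the punctured disc
    intro z hz
    have hz0 : z ≠ 0 := hz.2
    have hPz : z ^ 2 - 2 * c * z + 1 ≠ 0 := hP z hz.1
    have hden : z * (z ^ 2 - 2 * c * z + 1) ^ 2 ≠ 0 :=
      mul_ne_zero hz0 (pow_ne_zero 2 hPz)
    have hid : AnalyticAt ℂ (fun z : ℂ => z) z := analyticAt_id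
    have hPa : AnalyticAt ℂ (fun z : ℂ => z ^ 2 - 2 * c * z + 1) z :=
      ((hid.pow 2).sub (analyticAt_const.mul hid)).add analyticAt_const
    have hNa : AnalyticAt ℂ N z := by
      rw [hN]
      exact ((analyticAt_const.mul (hid.pow 2)).add (analyticAt_const.mul hid)).sub
        analyticAt_const
    exact AnalyticAt.div hNa (hid.mul (hPa.pow 2)) hden
  · -- agreement with the Schwarzian of h on every branch domain
    intro U hUopen hUconn hUsub L hLdiff hLexp
    have hmem : ∀ z ∈ U, z ≠ 0 ∧ z ^ 2 - 2 * c * z + 1 ≠ 0 := by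
      intro z hz
      exact ⟨(hUsub hz).2, hP z (hUsub hz).1⟩
    set h : ℂ → ℂ := fun z => (1 / 2 : ℂ) * (Complex.I * z + 1 / (Complex.I * z)) -
      Complex.I * c * L z with hhdef
    have hderivh : ∀ z ∈ U, HasDerivAt h (g1 z) z := by
      intro z hz
      obtain ⟨hz0, hPz⟩ := hmem z hz
      have hiz : Complex.I * z ≠ 0 := mul_ne_zero Complex.I_ne_zero hz0
      -- branch derivative: L' = 1/z
      have hLd : DifferentiableAt ℂ L z :=
        (hLdiff z hz).differentiableAt (hUopen.mem_nhds hz)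
      have hde := hLd.hasDerivAt
      have A : HasDerivAt (fun w : ℂ => Complex.I * w) Complex.I z := by
        simpa using (hasDerivAt_id z).const_mul Complex.I
      have he : (fun w => Complex.I * w) =ᶠ[nhds z] (fun w => Complex.exp (L w)) :=
        Filter.eventually_of_mem (hUopen.mem_nhds hz) (fun w hw => (hLexp w hw).symm)
      have h1 : HasDerivAt (fun w : ℂ => Complex.I * w)
          (Complex.exp (L z) * deriv L z) z :=
        hde.cexp.congr_of_eventuallyEq he
      have h2 : Complex.exp (L z) * deriv L z = Complex.I := h1.unique A
      rw [hLexp z hz] at h2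
      have hLz : HasDerivAt L (1 / z) z := by
        have : deriv L z = 1 / z := by
          field_simp at h2 ⊢
          exact mul_left_cancel₀ Complex.I_ne_zero (by linear_combination Complex.I * h2)
        rwa [this] at hde
      have B : HasDerivAt (fun w : ℂ => (Complex.I * w)⁻¹)
          (-Complex.I / (Complex.I * z) ^ 2) z := A.inv hiz
      have C := ((A.add B).const_mul (1 / 2 : ℂ)).sub (hLz.const_mul (Complex.I * c))
      have hfun : (fun w : ℂ => (1 / 2 : ℂ) * (Complex.I * w + (Complex.I * w)⁻¹) -
          Complex.I * c * L w) = h := by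
        funext w
        rw [hhdef]
        simp [one_div]
      rw [← hfun]
      refine C.congr_deriv ?_
      rw [hg1def, show (Complex.I * z) ^ 2 = -z ^ 2 by
        rw [mul_pow, Complex.I_sq]; ring]
      field_simp
      ring
    have hd1 : ∀ z ∈ U, deriv h z = g1 z := fun z hz => (hderivh z hz).deriv
    have hd2 : ∀ z ∈ U, deriv (deriv h) z = g2 z := by
      intro z hz
      have heq : deriv h =ᶠ[nhds z] g1 :=
        Filter.eventually_of_mem (hUopen.mem_nhds hz) (fun w hw => hd1 w hw)
      rw [heq.deriv_eq, (hg1 z (hmem z hz).1).deriv]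
    have hd3 : ∀ z ∈ U, deriv (deriv (deriv h)) z = g3 z := by
      intro z hz
      have heq : deriv (deriv h) =ᶠ[nhds z] g2 :=
        Filter.eventually_of_mem (hUopen.mem_nhds hz) (fun w hw => hd2 w hw)
      rw [heq.deriv_eq, (hg2 z (hmem z hz).1).deriv]
    refine ⟨?_, ?_, ?_⟩
    · intro z hz
      exact ((hderivh z hz).differentiableAt).differentiableWithinAt
    · intro z hz
      obtain ⟨hz0, hPz⟩ := hmem z hz
      rw [hd1 z hz, hg1def]
      exact div_ne_zero (mul_ne_zero Complex.I_ne_zero hPz)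
        (by simp [pow_eq_zero_iff, hz0])
    · intro z hz
      obtain ⟨hz0, hPz⟩ := hmem z hz
      rw [schwarzian, hd1 z hz, hd2 z hz, hd3 z hz]
      have hr3 : g3 z / g1 z = 2 * (3 - 2 * c * z) / (z ^ 2 * (z ^ 2 - 2 * c * z + 1)) := by
        rw [hg3def, hg1def]
        field_simp [Complex.I_ne_zero]
      have hr2 : g2 z / g1 z = 2 * (c * z - 1) / (z * (z ^ 2 - 2 * c * z + 1)) := by
        rw [hg2def, hg1def]
        field_simp [Complex.I_ne_zero]
      rw [hr3, hr2, hq, hN]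
      field_simp
      ring
  · -- the simple pole at 0 with residue −4c
    have hcont : Tendsto (fun z : ℂ => N z / ((z ^ 2 - 2 * c * z + 1) ^ 2))
        (nhds 0) (nhds (-4 * c)) := by
      have h0 : (((0 : ℂ) ^ 2 - 2 * c * 0 + 1) ^ 2) ≠ 0 := by norm_num
      have hca : ContinuousAt (fun z : ℂ => N z / ((z ^ 2 - 2 * c * z + 1) ^ 2)) 0 :=
        ContinuousAt.div (by fun_prop) (by fun_prop) h0
      have := hca.tendsto
      simpa [hN] using this
    refine Tendsto.congr' ?_ (hcont.mono_left nhdsWithin_le_nhds)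
    filter_upwards [self_mem_nhdsWithin] with z hz
    have hz0 : z ≠ 0 := hz
    rw [hq]
    rcases eq_or_ne (z ^ 2 - 2 * c * z + 1) 0 with hp | hp
    · simp [hp]
    · field_simp
end

section
/- Let 0 < θ < π/2 and let q : 𝔻∖{0} → ℂ be the analytic function equal to the Schwarzian derivative of h_θ(z) = (1/2)(iz + 1/(iz)) − i cos(θ)·L(z) on every open subset of 𝔻∖{0} carrying a holomorphic branch L of log(iz). Define the Möbius transformation φ_θ(w) = (w − e^{iθ})/(w e^{iθ} − 1) (an involution with φ_θ(e^{iθ}) = 0 and φ_θ(0) = e^{iθ}). Then lim_{w→e^{iθ}} (w − e^{iθ})·q(φ_θ(w))·(φ_θ′(w))² = 2i·cot(θ)·e^{−iθ}, and this value equals one half of the Wirtinger derivative ∂_z = (∂_x − i∂_y)/2 of the function z ↦ −8 log(Im z/|z|) evaluated at z = e^{iθ}. -/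
open Complex Filter

/-- The Wirtinger derivative `∂_z u = (∂_x u − i ∂_y u)/2` of a real-valued function. -/
noncomputable def wirtinger (u : ℂ → ℝ) (z : ℂ) : ℂ :=
  (1 / 2 : ℂ) * (((fderiv ℝ u z) 1 : ℝ) - Complex.I * ((fderiv ℝ u z) Complex.I : ℝ))


section Helpers
open Metric

lemma hasDerivAt_H1 (c w : ℂ) (hw : w ≠ 0) :
    HasDerivAt (fun w : ℂ => I/2*(1+1/w^2) - I*c*(1/w)) (-I*(1/w^3) + I*c*(1/w^2)) w := by
  have A : HasDerivAt (fun w : ℂ => w^2) (2*w) w := by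
    simpa using hasDerivAt_pow 2 w
  have A2 : HasDerivAt (fun w : ℂ => 1/w^2) (-(2*w)/(w^2)^2) w := by
    simpa [one_div] using A.fun_inv (pow_ne_zero 2 hw)
  have B : HasDerivAt (fun w : ℂ => 1/w) (-(w^2)⁻¹) w := by
    simpa [one_div] using hasDerivAt_inv hw
  have := ((A2.const_add 1).const_mul (I/2)).sub (B.const_mul (I*c))
  refine this.congr_deriv ?_
  field_simp
  ring

lemma hasDerivAt_H2 (c w : ℂ) (hw : w ≠ 0) :
    HasDerivAt (fun w : ℂ => -I*(1/w^3) + I*c*(1/w^2)) (3*I*(1/w^4) - 2*I*c*(1/w^3)) w := by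
  have A : HasDerivAt (fun w : ℂ => w^3) (3*w^2) w := by
    simpa using hasDerivAt_pow 3 w
  have A2 : HasDerivAt (fun w : ℂ => 1/w^3) (-(3*w^2)/(w^3)^2) w := by
    simpa [one_div] using A.fun_inv (pow_ne_zero 3 hw)
  have B : HasDerivAt (fun w : ℂ => w^2) (2*w) w := by
    simpa using hasDerivAt_pow 2 w
  have B2 : HasDerivAt (fun w : ℂ => 1/w^2) (-(2*w)/(w^2)^2) w := by
    simpa [one_div] using B.fun_inv (pow_ne_zero 2 hw)
  have := (A2.const_mul (-I)).add (B2.const_mul (I*c))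
  refine this.congr_deriv ?_
  field_simp
  ring

lemma schwarzian_eval (c : ℂ) (h : ℂ → ℂ) (U : Set ℂ) (hU : IsOpen U)
    (h0 : ∀ w ∈ U, w ≠ 0)
    (hd : ∀ w ∈ U, HasDerivAt h (I/2*(1+1/w^2) - I*c*(1/w)) w)
    (z : ℂ) (hz : z ∈ U) (hP : z^2 - 2*c*z + 1 ≠ 0) :
    schwarzian h z = -2*(2*c*z^2-(3+c^2)*z+2*c)/(z*(z^2-2*c*z+1)^2) := by
  have hz0 := h0 z hz
  have e1 : Set.EqOn (deriv h) (fun w => I/2*(1+1/w^2) - I*c*(1/w)) U :=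
    fun w hw => (hd w hw).deriv
  have e2 : Set.EqOn (deriv (deriv h)) (fun w => -I*(1/w^3) + I*c*(1/w^2)) U := by
    intro w hw
    have heq : deriv h =ᶠ[nhds w] (fun w => I/2*(1+1/w^2) - I*c*(1/w)) :=
      eventuallyEq_of_mem (hU.mem_nhds hw) e1
    rw [heq.deriv_eq, (hasDerivAt_H1 c w (h0 w hw)).deriv]
  have e3 : deriv (deriv (deriv h)) z = 3*I*(1/z^4) - 2*I*c*(1/z^3) := by
    have heq : deriv (deriv h) =ᶠ[nhds z] (fun w => -I*(1/w^3) + I*c*(1/w^2)) :=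
      eventuallyEq_of_mem (hU.mem_nhds hz) e2
    rw [heq.deriv_eq, (hasDerivAt_H2 c z hz0).deriv]
  have e1z : deriv h z = I*(z^2-2*c*z+1)/(2*z^2) := by
    rw [e1 hz]; field_simp; ring
  have e2z : deriv (deriv h) z = I*(c*z-1)/z^3 := by
    rw [e2 hz]; field_simp; ring
  have e3z : deriv (deriv (deriv h)) z = I*(3-2*c*z)/z^4 := by
    rw [e3]; field_simp
  have hne : I*(z^2-2*c*z+1)/(2*z^2) ≠ 0 :=
    div_ne_zero (mul_ne_zero I_ne_zero hP) (by simp [hz0])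
  have q1 : I*(3-2*c*z)/z^4 / (I*(z^2-2*c*z+1)/(2*z^2)) =
      2*(3-2*c*z)/(z^2*(z^2-2*c*z+1)) := by
    rw [div_div_div_comm, mul_div_mul_left _ _ I_ne_zero]
    field_simp [hz0, hP]
  have q2 : I*(c*z-1)/z^3 / (I*(z^2-2*c*z+1)/(2*z^2)) =
      2*(c*z-1)/(z*(z^2-2*c*z+1)) := by
    rw [div_div_div_comm, mul_div_mul_left _ _ I_ne_zero]
    field_simp [hz0, hP]
  unfold schwarzian
  rw [e3z, e2z, e1z, q1, q2]
  field_simp [hz0, hP]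
  ring

lemma hasDerivAt_h (c z₀ : ℂ) (hz₀ : z₀ ≠ 0) (w : ℂ) (hw : w ≠ 0)
    (hslit : w / z₀ ∈ Complex.slitPlane) :
    HasDerivAt (fun w => (1/2 : ℂ) * (I*w + 1/(I*w)) -
        I*c*(Complex.log (w/z₀) + Complex.log (I*z₀)))
      (I/2*(1+1/w^2) - I*c*(1/w)) w := by
  have m : HasDerivAt (fun w : ℂ => I*w) I w := by
    simpa using (hasDerivAt_id w).const_mul I
  have minv : HasDerivAt (fun w : ℂ => 1/(I*w)) (-I/(I*w)^2) w := by
    simpa [one_div] using m.fun_inv (mul_ne_zero I_ne_zero hw)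
  have part1 : HasDerivAt (fun w : ℂ => (1/2 : ℂ) * (I*w + 1/(I*w)))
      ((1/2 : ℂ) * (I + -I/(I*w)^2)) w := (m.add minv).const_mul _
  have hdiv : HasDerivAt (fun w : ℂ => w/z₀) (1/z₀) w := by
    simpa [one_div] using (hasDerivAt_id w).div_const z₀
  have hlog : HasDerivAt (fun w : ℂ => Complex.log (w/z₀)) ((w/z₀)⁻¹ * (1/z₀)) w :=
    (Complex.hasDerivAt_log hslit).comp (h₂ := Complex.log) w hdiv
  have part2 : HasDerivAt (fun w : ℂ => I*c*(Complex.log (w/z₀) + Complex.log (I*z₀)))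
      (I*c*((w/z₀)⁻¹ * (1/z₀))) w := by
    simpa using ((hlog.add_const (Complex.log (I*z₀))).const_mul (I*c))
  have := part1.sub part2
  refine this.congr_deriv ?_
  have hI2 : (I*w)^2 = -(w^2) := by rw [mul_pow, I_sq]; ring
  rw [hI2]
  field_simp

lemma q_eq_formula (c : ℝ) (q : ℂ → ℂ)
    (hqS : ∀ U : Set ℂ, IsOpen U → U ⊆ Metric.ball (0 : ℂ) 1 \ {0} →
      ∀ L : ℂ → ℂ, DifferentiableOn ℂ L U →
        (∀ z ∈ U, Complex.exp (L z) = Complex.I * z) →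
        ∀ z ∈ U,
          q z = schwarzian (fun w => (1 / 2 : ℂ) * (Complex.I * w + 1 / (Complex.I * w)) -
            Complex.I * (c : ℂ) * L w) z)
    (z : ℂ) (hz : z ∈ Metric.ball (0 : ℂ) 1 \ {0})
    (hP : z^2 - 2*(c : ℂ)*z + 1 ≠ 0) :
    q z = -2*(2*(c : ℂ)*z^2-(3+(c : ℂ)^2)*z+2*(c : ℂ))/(z*(z^2-2*(c : ℂ)*z+1)^2) := by
  obtain ⟨hzb, hz0'⟩ := hz
  have hz0 : z ≠ 0 := by simpa using hz0'
  have hzpos : 0 < ‖z‖ := by simpa [norm_pos_iff] using hz0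
  have hzlt : ‖z‖ < 1 := by
    simpa [Complex.dist_eq] using (Metric.mem_ball.1 hzb)
  set r : ℝ := min (‖z‖) (1 - ‖z‖) with hr_def
  have hr : 0 < r := lt_min hzpos (by linarith)
  set U : Set ℂ := Metric.ball z r with hU_def
  have hmem : ∀ y ∈ U, ‖y - z‖ < r := by
    intro y hy
    simpa [Complex.dist_eq] using (Metric.mem_ball.1 hy)
  have hne0 : ∀ y ∈ U, y ≠ 0 := by
    intro y hy h0
    have := hmem y hy
    rw [h0] at this
    simp only [zero_sub, norm_neg] at this
    exact absurd (lt_of_lt_of_le this (min_le_left _ _)) (lt_irrefl _)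
  have hsub : U ⊆ Metric.ball (0 : ℂ) 1 \ {0} := by
    intro y hy
    refine ⟨?_, by simpa using hne0 y hy⟩
    rw [Metric.mem_ball, Complex.dist_eq, sub_zero]
    have h1 : ‖y‖ ≤ ‖y - z‖ + ‖z‖ := by
      simpa using norm_add_le (y - z) z
    have h2 := hmem y hy
    have h3 : r ≤ 1 - ‖z‖ := min_le_right _ _
    linarith
  have hslit : ∀ y ∈ U, y / z ∈ Complex.slitPlane := by
    intro y hy
    rw [Complex.mem_slitPlane_iff]
    left
    have h1 : ‖y/z - 1‖ < 1 := by
      have : y/z - 1 = (y - z)/z := by field_simp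
      rw [this, norm_div]
      rw [div_lt_one hzpos]
      exact lt_of_lt_of_le (hmem y hy) (min_le_left _ _)
    have h2 := Complex.abs_re_le_norm (y/z - 1)
    have h3 : |(y/z).re - 1| < 1 := by
      simpa [Complex.sub_re, Complex.one_re] using lt_of_le_of_lt h2 h1
    have := abs_lt.1 h3
    linarith [this.1]
  set L : ℂ → ℂ := fun y => Complex.log (y / z) + Complex.log (I * z) with hL_def
  have hLdiff : DifferentiableOn ℂ L U := by
    intro y hy
    apply DifferentiableAt.differentiableWithinAt
    have h1 : DifferentiableAt ℂ (fun y : ℂ => Complex.log (y / z)) y :=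
      (Complex.differentiableAt_log (hslit y hy)).comp (g := Complex.log) y (differentiableAt_id.div_const z)
    exact h1.add_const _
  have hLexp : ∀ y ∈ U, Complex.exp (L y) = Complex.I * y := by
    intro y hy
    rw [hL_def]
    simp only
    rw [Complex.exp_add, Complex.exp_log (div_ne_zero (hne0 y hy) hz0),
      Complex.exp_log (mul_ne_zero I_ne_zero hz0)]
    field_simp
  have hqz := hqS U Metric.isOpen_ball hsub L hLdiff hLexp z (Metric.mem_ball_self hr)
  rw [hqz]
  exact schwarzian_eval (c : ℂ) _ U Metric.isOpen_ball hne0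
    (fun w hw => hasDerivAt_h (c : ℂ) z hz0 w (hne0 w hw) (hslit w hw)) z
    (Metric.mem_ball_self hr) hP

end Helpers

set_option maxHeartbeats 2000000 in
/-- **The residue of the Schwarzian of the uniformizing map of the `C¹` geodesic pair
through `e^{iθ}` equals half the Wirtinger derivative of the minimal Loewner energy.**
Let `q` be the analytic function on `𝔻 ∖ {0}` equal to the Schwarzian of
`h_θ(z) = (1/2)(i z + 1/(i z)) − i cos θ · L(z)` on every open set carrying a holomorphic
branch `L` of `log(i z)`, and let `φ_θ(w) = (w − e^{iθ})/(w e^{iθ} − 1)`. Then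
`(w − e^{iθ}) · q(φ_θ(w)) · (φ_θ′(w))² → 2i cot θ · e^{−iθ}` as `w → e^{iθ}`, and this
value equals `(1/2) ∂_z (−8 log(Im z/|z|))` at `z = e^{iθ}`. -/
theorem schwarzian_residue_equals_half_energy_derivative
    (θ : ℝ) (hθ0 : 0 < θ) (hθ : θ < Real.pi / 2)
    (q : ℂ → ℂ)
    (hq : AnalyticOnNhd ℂ q (Metric.ball (0 : ℂ) 1 \ {0}))
    (hqS : ∀ U : Set ℂ, IsOpen U → U ⊆ Metric.ball (0 : ℂ) 1 \ {0} →
      ∀ L : ℂ → ℂ, DifferentiableOn ℂ L U →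
        (∀ z ∈ U, Complex.exp (L z) = Complex.I * z) →
        ∀ z ∈ U,
          q z = schwarzian (fun w => (1 / 2 : ℂ) * (Complex.I * w + 1 / (Complex.I * w)) -
            Complex.I * (Real.cos θ : ℂ) * L w) z)
    (φ : ℂ → ℂ)
    (hφ : ∀ w, φ w = (w - Complex.exp ((θ : ℂ) * Complex.I)) /
      (w * Complex.exp ((θ : ℂ) * Complex.I) - 1)) :
    Tendsto
      (fun w => (w - Complex.exp ((θ : ℂ) * Complex.I)) * q (φ w) * (deriv φ w) ^ 2)
      (nhdsWithin (Complex.exp ((θ : ℂ) * Complex.I))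
        {Complex.exp ((θ : ℂ) * Complex.I)}ᶜ)
      (nhds (2 * Complex.I * ((Real.cos θ / Real.sin θ : ℝ) : ℂ) *
        Complex.exp (-(θ : ℂ) * Complex.I))) ∧
    2 * Complex.I * ((Real.cos θ / Real.sin θ : ℝ) : ℂ) *
        Complex.exp (-(θ : ℂ) * Complex.I)
      = (1 / 2 : ℂ) *
        wirtinger (fun z => -8 * Real.log (z.im / ‖z‖))
          (Complex.exp ((θ : ℂ) * Complex.I)) := by
  have hφ' : φ = fun w => (w - Complex.exp ((θ : ℂ) * Complex.I)) /
      (w * Complex.exp ((θ : ℂ) * Complex.I) - 1) := funext hφ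
  subst hφ'
  clear hq
  set c : ℝ := Real.cos θ with hc_def
  set s : ℝ := Real.sin θ with hs_def
  have hπ : θ < Real.pi := lt_trans hθ (by linarith [Real.pi_pos])
  have hs : 0 < s := Real.sin_pos_of_pos_of_lt_pi hθ0 hπ
  have hc : 0 < c := Real.cos_pos_of_mem_Ioo ⟨by linarith, hθ⟩
  have hcs : c^2 + s^2 = 1 := Real.cos_sq_add_sin_sq θ
  have hcsC : (c:ℂ)^2 + (s:ℂ)^2 = 1 := by exact_mod_cast congrArg (fun x : ℝ => (x:ℂ)) hcs
  set a : ℂ := Complex.exp ((θ : ℂ) * Complex.I) with ha_def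
  have ha : a = (c:ℂ) + (s:ℂ)*I := by
    rw [ha_def, Complex.exp_mul_I, ← Complex.ofReal_cos, ← Complex.ofReal_sin]
  have ha0 : a ≠ 0 := Complex.exp_ne_zero _
  have habs : ‖a‖ = 1 := by rw [ha_def, Complex.norm_exp]; simp
  have hmul : a * Complex.exp (-(θ:ℂ)*I) = 1 := by
    rw [ha_def, ← Complex.exp_add, show (θ:ℂ)*I + -(θ:ℂ)*I = 0 by ring, Complex.exp_zero]
  have hb : Complex.exp (-(θ:ℂ)*I) = (c:ℂ) - (s:ℂ)*I := by
    have h2 : a * ((c:ℂ) - (s:ℂ)*I) = 1 := by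
      rw [ha]; linear_combination hcsC - (s:ℂ)^2 * Complex.I_sq
    exact mul_left_cancel₀ ha0 (hmul.trans h2.symm)
  have hbabs : ‖Complex.exp (-(θ:ℂ)*I)‖ = 1 := by rw [Complex.norm_exp]; simp
  have ha2 : a^2 - 1 = 2*I*(s:ℂ)*a := by
    rw [ha]; linear_combination hcsC - (s:ℂ)^2 * Complex.I_sq
  have ha21 : a^2 - 1 ≠ 0 := by
    rw [ha2]
    exact mul_ne_zero (mul_ne_zero (mul_ne_zero two_ne_zero I_ne_zero)
      (by exact_mod_cast hs.ne')) ha0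
  have haa : a * a - 1 ≠ 0 := by
    rw [show a * a - 1 = a^2 - 1 by ring]; exact ha21
  have hcirc : ∀ x : ℂ, ‖x‖ < 1 → x^2 - 2*(c:ℂ)*x + 1 ≠ 0 := by
    intro x hx
    have hfac : x^2 - 2*(c:ℂ)*x + 1 = (x - a) * (x - Complex.exp (-(θ:ℂ)*I)) := by
      rw [ha, hb]; linear_combination (s:ℂ)^2 * Complex.I_sq - hcsC
    rw [hfac]
    apply mul_ne_zero
    · intro h
      rw [sub_eq_zero] at h
      rw [h, habs] at hx
      exact lt_irrefl _ hx
    · intro h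
      rw [sub_eq_zero] at h
      rw [h, hbabs] at hx
      exact lt_irrefl _ hx
  have key : ∀ x : ℂ, x ∈ Metric.ball (0 : ℂ) 1 \ {0} →
      q x = -2*(2*(c:ℂ)*x^2-(3+(c:ℂ)^2)*x+2*(c:ℂ))/(x*(x^2-2*(c:ℂ)*x+1)^2) := by
    intro x hx
    refine q_eq_formula c q hqS x hx (hcirc x ?_)
    have := hx.1
    rw [Metric.mem_ball, Complex.dist_eq, sub_zero] at this
    exact this
  -- half the Wirtinger derivative
  have hre : a.re = c := by rw [ha]; simp
  have him : a.im = s := by rw [ha]; simp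
  have him_pos : 0 < a.im := by rw [him]; exact hs
  have hwirt : 2 * Complex.I * ((c / s : ℝ) : ℂ) * Complex.exp (-(θ:ℂ) * I)
      = (1 / 2 : ℂ) * wirtinger (fun z => -8 * Real.log (z.im / ‖z‖)) a := by
    have h_im : HasFDerivAt (fun z : ℂ => z.im) (Complex.imCLM : ℂ →L[ℝ] ℝ) a :=
      Complex.imCLM.hasFDerivAt
    have h_re : HasFDerivAt (fun z : ℂ => z.re) (Complex.reCLM : ℂ →L[ℝ] ℝ) a :=
      Complex.reCLM.hasFDerivAt
    have hlog1 : HasFDerivAt (fun z : ℂ => Real.log z.im)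
        ((a.im)⁻¹ • (Complex.imCLM : ℂ →L[ℝ] ℝ)) a :=
      (Real.hasDerivAt_log (ne_of_gt him_pos)).comp_hasFDerivAt a h_im
    have hsq : HasFDerivAt (fun z : ℂ => z.re * z.re + z.im * z.im)
        ((a.re • (Complex.reCLM : ℂ →L[ℝ] ℝ) + a.re • (Complex.reCLM : ℂ →L[ℝ] ℝ)) +
         (a.im • (Complex.imCLM : ℂ →L[ℝ] ℝ) + a.im • (Complex.imCLM : ℂ →L[ℝ] ℝ))) a :=
      (h_re.mul h_re).add (h_im.mul h_im)
    have hlog2 : HasFDerivAt (fun z : ℂ => Real.log (z.re * z.re + z.im * z.im))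
        ((a.re * a.re + a.im * a.im)⁻¹ •
          ((a.re • (Complex.reCLM : ℂ →L[ℝ] ℝ) + a.re • (Complex.reCLM : ℂ →L[ℝ] ℝ)) +
           (a.im • (Complex.imCLM : ℂ →L[ℝ] ℝ) + a.im • (Complex.imCLM : ℂ →L[ℝ] ℝ)))) a := by
      refine (Real.hasDerivAt_log ?_).comp_hasFDerivAt a hsq
      rw [hre, him]; nlinarith [hcs]
    have hv : HasFDerivAt (fun z : ℂ => -8 * Real.log z.im + 4 * Real.log (z.re * z.re + z.im * z.im))
        ((-8 : ℝ) • ((a.im)⁻¹ • (Complex.imCLM : ℂ →L[ℝ] ℝ)) +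
         (4 : ℝ) • ((a.re * a.re + a.im * a.im)⁻¹ •
          ((a.re • (Complex.reCLM : ℂ →L[ℝ] ℝ) + a.re • (Complex.reCLM : ℂ →L[ℝ] ℝ)) +
           (a.im • (Complex.imCLM : ℂ →L[ℝ] ℝ) + a.im • (Complex.imCLM : ℂ →L[ℝ] ℝ))))) a :=
      (hlog1.const_mul (-8)).add (hlog2.const_mul 4)
    have hEq : (fun z : ℂ => -8 * Real.log (z.im / ‖z‖)) =ᶠ[nhds a]
        (fun z : ℂ => -8 * Real.log z.im + 4 * Real.log (z.re * z.re + z.im * z.im)) := by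
      have hopen : IsOpen {z : ℂ | 0 < z.im} := isOpen_lt continuous_const Complex.continuous_im
      filter_upwards [hopen.mem_nhds him_pos] with z hz
      have hz0 : z ≠ 0 := by
        intro h; rw [h] at hz; simp at hz
      have habs0 : ‖z‖ ≠ 0 := norm_ne_zero_iff.mpr hz0
      rw [Real.log_div (ne_of_gt hz) habs0]
      have hlogabs : Real.log (‖z‖) = Real.log (z.re * z.re + z.im * z.im) / 2 := by
        rw [Complex.norm_def, Real.log_sqrt (Complex.normSq_nonneg z), Complex.normSq_apply]
      rw [hlogabs]; ring
    have hu : HasFDerivAt (fun z : ℂ => -8 * Real.log (z.im / ‖z‖))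
        ((-8 : ℝ) • ((a.im)⁻¹ • (Complex.imCLM : ℂ →L[ℝ] ℝ)) +
         (4 : ℝ) • ((a.re * a.re + a.im * a.im)⁻¹ •
          ((a.re • (Complex.reCLM : ℂ →L[ℝ] ℝ) + a.re • (Complex.reCLM : ℂ →L[ℝ] ℝ)) +
           (a.im • (Complex.imCLM : ℂ →L[ℝ] ℝ) + a.im • (Complex.imCLM : ℂ →L[ℝ] ℝ))))) a :=
      hv.congr_of_eventuallyEq hEq
    rw [wirtinger, hu.fderiv]
    simp only [ContinuousLinearMap.add_apply, ContinuousLinearMap.smul_apply,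
      Complex.reCLM_apply, Complex.imCLM_apply, Complex.one_re, Complex.one_im,
      Complex.I_re, Complex.I_im, smul_eq_mul, hre, him, hb]
    have hss : (s : ℂ) ≠ 0 := by exact_mod_cast hs.ne'
    have hval : c * c + s * s = 1 := by nlinarith [hcs]
    rw [hval]
    push_cast
    field_simp
    linear_combination 8*I*hcsC - 8*(c:ℂ)*(s:ℂ) * Complex.I_sq
  -- the limit
  have hφcont : ContinuousAt (fun w => (w - a)/(w*a - 1)) a :=
    ContinuousAt.div (by fun_prop) (by fun_prop) haa
  have h0' : (a - a)/(a*a - 1) = 0 := by simp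
  have hderiv : ∀ w : ℂ, w*a - 1 ≠ 0 →
      deriv (fun w => (w - a)/(w*a - 1)) w = (a^2-1)/(w*a-1)^2 := by
    intro w hden
    have h1 : HasDerivAt (fun w : ℂ => (w - a)/(w*a - 1))
        ((1*(w*a-1) - (w-a)*(1*a))/(w*a-1)^2) w :=
      ((hasDerivAt_id w).sub_const a).div
        (((hasDerivAt_id w).mul_const a).sub_const 1) hden
    rw [h1.deriv]
    rw [div_eq_div_iff (pow_ne_zero 2 hden) (pow_ne_zero 2 hden)]
    ring
  set G : ℂ → ℂ := fun w =>
    (-2*(2*(c:ℂ)*((w - a)/(w*a - 1))^2 - (3+(c:ℂ)^2)*((w - a)/(w*a - 1)) + 2*(c:ℂ)) /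
      ((((w - a)/(w*a - 1))^2 - 2*(c:ℂ)*((w - a)/(w*a - 1)) + 1)^2)) *
    ((a^2-1)^2/(w*a-1)^3) with hG_def
  have hGcont : ContinuousAt G a := by
    apply ContinuousAt.mul
    · apply ContinuousAt.div
      · exact (continuousAt_const.mul (((continuousAt_const.mul (hφcont.pow 2)).sub
          (continuousAt_const.mul hφcont)).add continuousAt_const))
      · exact (((hφcont.pow 2).sub (continuousAt_const.mul hφcont)).add continuousAt_const).pow 2
      · rw [h0']; norm_num
    · exact ContinuousAt.div continuousAt_const (by fun_prop) (pow_ne_zero 3 haa)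
  have hGa : G a = 2 * Complex.I * ((c / s : ℝ) : ℂ) * Complex.exp (-(θ:ℂ) * I) := by
    rw [hG_def]
    simp only
    rw [h0']
    have h4 : -2*(2*(c:ℂ)*(0:ℂ)^2 - (3+(c:ℂ)^2)*(0:ℂ) + 2*(c:ℂ)) /
        (((0:ℂ)^2 - 2*(c:ℂ)*(0:ℂ) + 1)^2) = -4*(c:ℂ) := by norm_num; ring
    rw [h4, show a*a - 1 = a^2 - 1 by ring]
    rw [show ((a^2-1)^2/(a^2-1)^3) = 1/(a^2-1) by
      rw [div_eq_div_iff (pow_ne_zero 3 ha21) ha21]; ring]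
    rw [ha2, hb]
    have hss : (s:ℂ) ≠ 0 := by exact_mod_cast hs.ne'
    have hden2 : 2*I*(s:ℂ)*a ≠ 0 :=
      mul_ne_zero (mul_ne_zero (mul_ne_zero two_ne_zero I_ne_zero) hss) ha0
    rw [mul_one_div, div_eq_iff hden2, ha]
    push_cast
    field_simp
    linear_combination 4*(c:ℂ)*hcsC + (-4*(c:ℂ)^3 + 4*(c:ℂ)*(s:ℂ)^2*(Complex.I^2-1)) * Complex.I_sq
  have hden_ev : ∀ᶠ w in nhds a, w*a - 1 ≠ 0 := by
    have hcont : ContinuousAt (fun w : ℂ => w*a - 1) a := by fun_prop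
    exact hcont.eventually_ne haa
  have hsmall_ev : ∀ᶠ w in nhds a, ‖(w - a)/(w*a - 1)‖ < 1 := by
    have h1 : Tendsto (fun w => ‖(w - a)/(w*a - 1)‖) (nhds a)
        (nhds (‖(a - a)/(a*a - 1)‖)) :=
      (continuous_norm.continuousAt.comp hφcont)
    rw [h0'] at h1
    simp only [norm_zero] at h1
    exact h1.eventually_lt_const one_pos
  constructor
  · have hGtend : Tendsto G (nhdsWithin a {a}ᶜ) (nhds (G a)) := hGcont.continuousWithinAt
    rw [hGa] at hGtend
    refine hGtend.congr' ?_
    filter_upwards [self_mem_nhdsWithin,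
      ((hden_ev.and hsmall_ev).filter_mono nhdsWithin_le_nhds)] with w hw1 hw2
    obtain ⟨hden, hsmall⟩ := hw2
    have hwa : w ≠ a := hw1
    set x : ℂ := (w - a)/(w*a - 1) with hx_def
    have hx0 : x ≠ 0 := div_ne_zero (sub_ne_zero.2 hwa) hden
    have hxball : x ∈ Metric.ball (0 : ℂ) 1 \ {0} := by
      constructor
      · rw [Metric.mem_ball, Complex.dist_eq, sub_zero]; exact hsmall
      · simpa using hx0
    have hPx : x^2 - 2*(c:ℂ)*x + 1 ≠ 0 := hcirc x hsmall
    have hq := key x hxball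
    rw [hG_def]
    simp only
    rw [← hx_def, hq, hderiv w hden]
    have hxw : w - a = x*(w*a - 1) := by rw [hx_def]; field_simp
    rw [hxw]
    field_simp
  · exact hwirt
end

section
/- Define f : (0, π) → ℝ by f(θ) = 2π/(θ − tan(θ)) for θ ≠ π/2 and f(π/2) = 0. Then f is continuously differentiable on (0, π) and strictly increasing on (0, π). -/
open Real Set

/-- denominator is negative on (0,π) -/
lemma denom_neg : ∀ θ ∈ Set.Ioo (0:ℝ) Real.pi, θ * Real.cos θ - Real.sin θ < 0 := by
  intro θ hθ
  set g : ℝ → ℝ := fun x => x * Real.cos x - Real.sin x with hg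
  have hderiv : ∀ x : ℝ, HasDerivAt g (-(x * Real.sin x)) x := by
    intro x
    have h1 : HasDerivAt (fun x : ℝ => x * Real.cos x) (1 * Real.cos x + x * (-Real.sin x)) x :=
      (hasDerivAt_id x).mul (Real.hasDerivAt_cos x)
    have h2 := h1.sub (Real.hasDerivAt_sin x)
    exact h2.congr_deriv (by ring)
  have hanti : StrictAntiOn g (Set.Icc 0 Real.pi) := by
    apply strictAntiOn_of_deriv_neg (convex_Icc _ _)
    · exact (Continuous.sub (continuous_id.mul Real.continuous_cos) Real.continuous_sin).continuousOn
    · intro x hx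
      rw [interior_Icc] at hx
      rw [(hderiv x).deriv]
      have := Real.sin_pos_of_pos_of_lt_pi hx.1 hx.2
      nlinarith [hx.1]
  have h0 : g 0 = 0 := by simp [hg]
  have := hanti (Set.left_mem_Icc.2 Real.pi_pos.le)
    ⟨hθ.1.le, hθ.2.le⟩ hθ.1
  rw [h0] at this
  exact this

/-- **The angle–jump relation `θ ↦ 2π/(θ − tan θ)` is `C¹` and strictly increasing on
`(0, π)`** (with the removable definition `f(π/2) = 0`). -/
theorem angle_jump_function_C1_strictMono
    (f : ℝ → ℝ)
    (hf : ∀ θ ∈ Set.Ioo (0 : ℝ) Real.pi, θ ≠ Real.pi / 2 →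
      f θ = 2 * Real.pi / (θ - Real.tan θ))
    (hf2 : f (Real.pi / 2) = 0) :
    ContDiffOn ℝ 1 f (Set.Ioo (0 : ℝ) Real.pi) ∧
    StrictMonoOn f (Set.Ioo (0 : ℝ) Real.pi) := by
  set F : ℝ → ℝ := fun θ => 2 * Real.pi * Real.cos θ / (θ * Real.cos θ - Real.sin θ) with hF
  have hD := denom_neg
  have heq : Set.EqOn f F (Set.Ioo 0 Real.pi) := by
    intro θ hθ
    by_cases hhalf : θ = Real.pi / 2
    · subst hhalf
      simp [hF, hf2, Real.cos_pi_div_two]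
    · have hc : Real.cos θ ≠ 0 := by
        intro h
        rcases Real.cos_eq_zero_iff.1 h with ⟨k, hk⟩
        have hp := Real.pi_pos
        have h1 : (0:ℝ) < 2 * k + 1 := by nlinarith [hθ.1]
        have h2 : (2 * (k:ℝ) + 1) < 2 := by nlinarith [hθ.2]
        have h1' : (0:ℤ) < 2 * k + 1 := by exact_mod_cast h1
        have h2' : (2 * k + 1 : ℤ) < 2 := by exact_mod_cast h2
        have : k = 0 := by omega
        subst this
        apply hhalf
        rw [hk]; ring
      rw [hf θ hθ hhalf, hF, Real.tan_eq_sin_div_cos]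
      have hd := hD θ hθ
      field_simp
  have hCont : ContDiffOn ℝ 1 F (Set.Ioo 0 Real.pi) := by
    apply ContDiffOn.div
    · exact (contDiff_const.mul Real.contDiff_cos).contDiffOn
    · exact ((contDiff_id.mul Real.contDiff_cos).sub Real.contDiff_sin).contDiffOn
    · intro x hx; exact ne_of_lt (hD x hx)
  have hderivF : ∀ x ∈ Set.Ioo (0:ℝ) Real.pi,
      HasDerivAt F (2 * Real.pi * Real.sin x ^ 2 / (x * Real.cos x - Real.sin x) ^ 2) x := by
    intro x hx
    have hd := hD x hx
    have hn : HasDerivAt (fun θ : ℝ => 2 * Real.pi * Real.cos θ) (2 * Real.pi * (-Real.sin x)) x :=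
      (Real.hasDerivAt_cos x).const_mul _
    have hden : HasDerivAt (fun θ : ℝ => θ * Real.cos θ - Real.sin θ) (-(x * Real.sin x)) x := by
      have h1 : HasDerivAt (fun θ : ℝ => θ * Real.cos θ) (1 * Real.cos x + x * (-Real.sin x)) x :=
        (hasDerivAt_id x).mul (Real.hasDerivAt_cos x)
      have h2 := h1.sub (Real.hasDerivAt_sin x)
      exact h2.congr_deriv (by ring)
    have := hn.div hden (ne_of_lt hd)
    refine this.congr_deriv ?_
    field_simp
    ring
  have hmonoF : StrictMonoOn F (Set.Ioo 0 Real.pi) := by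
    apply strictMonoOn_of_deriv_pos (convex_Ioo _ _) (hCont.continuousOn)
    intro x hx
    rw [interior_Ioo] at hx
    rw [(hderivF x hx).deriv]
    have hs := Real.sin_pos_of_pos_of_lt_pi hx.1 hx.2
    have hd := hD x hx
    have hs2 : 0 < Real.sin x ^ 2 := pow_pos hs 2
    have hd2 : 0 < (x * Real.cos x - Real.sin x) ^ 2 := by nlinarith
    have hp := Real.pi_pos
    exact div_pos (by nlinarith) hd2
  exact ⟨hCont.congr heq, hmonoF.congr heq.symm⟩
end
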